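/- arXiv:1107.1356 — 13 statements merged into one kernel-verified Lean document; each statement's English description precedes it below -/
import Mathlib

section
/- Let Y be a compact Hausdorff topological group with Haar probability measure μ, let Λ ≤ Y be a countable subgroup, and let a countable group Γ act on Y by continuous group automorphisms (α_g)_{g∈Γ} with α_g(Λ) = Λ for all g. Assume that for every g ∈ Γ with g ≠ e, the closed subgroup {y ∈ Y : α_g(y) = y} has infinite index in Y. Then the action of the semidirect product Λ ⋊ Γ on Y given by (λ, g)·y = λ·α_g(y) is essentially free: for every pair (λ, g) ∈ Λ × Γ with (λ, g) ≠ (e, e), the set {y ∈ Y : λ·α_g(y) = y} is μ-null. -/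
open MeasureTheory


theorem null_of_infinite_index {Y : Type*} [Group Y] [MeasurableSpace Y] [MeasurableMul Y]
    (μ : Measure Y) [μ.IsMulLeftInvariant] [IsProbabilityMeasure μ]
    (H : Subgroup Y) (hH : MeasurableSet (H : Set Y)) (hI : Infinite (Y ⧸ H)) :
    μ (H : Set Y) = 0 := by
  by_contra h0
  have : Infinite (Y ⧸ H) := hI
  let f : ℕ → Y ⧸ H := Infinite.natEmbedding (Y ⧸ H)
  have hf : Function.Injective f := (Infinite.natEmbedding (Y ⧸ H)).injective
  set y : ℕ → Y := fun n => Quotient.out (f n)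
  have hmk : ∀ n, (QuotientGroup.mk (y n) : Y ⧸ H) = f n := fun n => (f n).out_eq'
  set A : ℕ → Set Y := fun n => (fun x => (y n)⁻¹ * x) ⁻¹' (H : Set Y)
  have hmeas : ∀ n, MeasurableSet (A n) := fun n =>
    hH.preimage (measurable_const_mul _)
  have hμA : ∀ n, μ (A n) = μ (H : Set Y) := fun n => measure_preimage_mul μ _ _
  have hdisj : Pairwise (Function.onFun Disjoint A) := by
    intro n m hnm
    refine Set.disjoint_left.mpr fun x hxn hxm => hnm (hf ?_)
    rw [← hmk n, ← hmk m]
    have h1 : (QuotientGroup.mk (y n) : Y ⧸ H) = QuotientGroup.mk x :=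
      (QuotientGroup.eq).mpr hxn
    have h2 : (QuotientGroup.mk (y m) : Y ⧸ H) = QuotientGroup.mk x :=
      (QuotientGroup.eq).mpr hxm
    rw [h1, h2]
  have htop : μ (⋃ n, A n) = ⊤ := by
    rw [measure_iUnion hdisj hmeas]
    simp only [hμA]
    exact ENNReal.tsum_const_eq_top_of_ne_zero h0
  exact (measure_ne_top μ _) htop


/-- The subgroup of fixed points of a group automorphism. -/
def fixedSubgroup {Y : Type*} [Group Y] (φ : Y ≃* Y) : Subgroup Y where
  carrier := {y | φ y = y}
  one_mem' := map_one φ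
  mul_mem' := by
    intro a b ha hb
    simp only [Set.mem_setOf_eq] at *
    rw [map_mul, ha, hb]
  inv_mem' := by
    intro a ha
    simp only [Set.mem_setOf_eq] at *
    rw [map_inv, ha]

/-- Let `Y` be a compact Hausdorff topological group with Haar probability
measure `μ`, `Λ ≤ Y` a countable subgroup, and let a countable group `Γ` act on `Y` by
continuous group automorphisms `α_g` with `α_g(Λ) = Λ`.  If for every `g ≠ e` the subgroup
of `α_g`-fixed points has infinite index in `Y`, then the action of `Λ ⋊ Γ` on `Y` given by
`(λ, g) · y = λ · α_g(y)` is essentially free: for every `(λ, g) ≠ (e, e)` the set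
`{y | λ · α_g(y) = y}` is `μ`-null. -/
theorem translation_automorphism_action_essentially_free
    {Y : Type*} [Group Y] [TopologicalSpace Y] [IsTopologicalGroup Y]
    [CompactSpace Y] [T2Space Y] [MeasurableSpace Y] [BorelSpace Y]
    (μ : Measure Y) [μ.IsHaarMeasure] [IsProbabilityMeasure μ]
    (Λ : Subgroup Y) (hΛcount : Countable Λ)
    {Γ : Type*} [Group Γ] [Countable Γ]
    (α : Γ →* MulAut Y) (hcont : ∀ g : Γ, Continuous (α g))
    (hΛinv : ∀ g : Γ, Subgroup.map (α g).toMonoidHom Λ = Λ)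
    (hfix : ∀ g : Γ, g ≠ 1 → Infinite (Y ⧸ fixedSubgroup (α g)))
    (lam : Y) (hlam : lam ∈ Λ) (g : Γ) (hne : ¬(lam = 1 ∧ g = 1)) :
    μ {y : Y | lam * (α g) y = y} = 0 := by
  rcases eq_or_ne g 1 with rfl | hg
  · -- g = 1, so lam ≠ 1 and the set is empty
    have hlam1 : lam ≠ 1 := fun h => hne ⟨h, rfl⟩
    have : {y : Y | lam * (α 1) y = y} = ∅ := by
      ext y
      simp only [map_one, MulAut.one_apply, Set.mem_setOf_eq, Set.mem_empty_iff_false,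
        iff_false]
      intro h
      exact hlam1 (mul_right_cancel (by rw [h, one_mul]))
    rw [this, measure_empty]
  · set H := fixedSubgroup (α g) with hH
    have hclosed : IsClosed (H : Set Y) := isClosed_eq (hcont g) continuous_id
    have hmeas : MeasurableSet (H : Set Y) := hclosed.measurableSet
    rcases Set.eq_empty_or_nonempty {y : Y | lam * (α g) y = y} with he | ⟨y₀, hy₀⟩
    · rw [he, measure_empty]
    · have hy₀' : (α g) y₀ = lam⁻¹ * y₀ := by
        rw [eq_inv_mul_iff_mul_eq]; exact hy₀
      have hset : {y : Y | lam * (α g) y = y} = (fun x => y₀⁻¹ * x) ⁻¹' (H : Set Y) := by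
        ext y
        simp only [Set.mem_setOf_eq, Set.mem_preimage, SetLike.mem_coe]
        constructor
        · intro hy
          have hy' : (α g) y = lam⁻¹ * y := by rw [eq_inv_mul_iff_mul_eq]; exact hy
          show (α g) (y₀⁻¹ * y) = y₀⁻¹ * y
          rw [map_mul, map_inv, hy₀', hy', mul_inv_rev, inv_inv, mul_assoc,
            ← mul_assoc lam, mul_inv_cancel, one_mul]
        · intro hy
          have hy' : (α g) (y₀⁻¹ * y) = y₀⁻¹ * y := hy
          rw [map_mul, map_inv, hy₀'] at hy'
          have : (α g) y = lam⁻¹ * y := by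
            have := congrArg (fun z => (lam⁻¹ * y₀) * z) hy'
            simpa [mul_assoc] using this
          rw [this, mul_inv_cancel_left]
      rw [hset, measure_preimage_mul]
      exact null_of_infinite_index μ H hmeas (hfix g hg)
end

section
/- Let 𝒢₁ ↷ (Z₁, μ₁) and 𝒢₂ ↷ (Z₂, μ₂) be free ergodic probability-measure-preserving actions of countable groups on standard probability spaces, and let Ψ : Z₁ → Z₂ be a stable orbit equivalence. If Λ ≤ 𝒢₁ is a subgroup such that Ψ(g·x) = Ψ(x) for all g ∈ Λ and almost every x ∈ Z₁, then Λ is a finite group. -/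
open MeasureTheory

/-- `Ψ : Z₁ → Z₂` is a local isomorphism between the measure spaces `(Z₁, μ₁)` and
`(Z₂, μ₂)`: `Z₁ can be partitioned, up to a null set, into countably many non-null
measurable pieces on each of which `Ψ` is an injective bimeasurable map onto a non-null
measurable subset of `Z₂`, pushing the restricted measure to a measure equivalent to the
restriction of `μ₂` to the image. -/
def IsLocalIso {Z₁ Z₂ : Type*} [MeasurableSpace Z₁] [MeasurableSpace Z₂]
    (μ₁ : Measure Z₁) (μ₂ : Measure Z₂) (Ψ : Z₁ → Z₂) : Prop :=
  Measurable Ψ ∧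
  ∃ (ι : Type) (_ : Countable ι) (W : ι → Set Z₁),
    (∀ n, MeasurableSet (W n)) ∧
    (∀ n m, n ≠ m → Disjoint (W n) (W m)) ∧
    μ₁ (⋃ n, W n)ᶜ = 0 ∧
    ∀ n, μ₁ (W n) ≠ 0 ∧
      Set.InjOn Ψ (W n) ∧
      MeasurableSet (Ψ '' W n) ∧
      μ₂ (Ψ '' W n) ≠ 0 ∧
      (∀ A : Set Z₁, A ⊆ W n → MeasurableSet A → MeasurableSet (Ψ '' A)) ∧
      (∀ B : Set Z₂, B ⊆ Ψ '' W n → MeasurableSet B →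
        (μ₂ B = 0 ↔ μ₁ (Ψ ⁻¹' B ∩ W n) = 0))

/-- `Ψ : Z₁ → Z₂` is a stable orbit equivalence between the actions `G₁ ↷ (Z₁, μ₁)` and
`G₂ ↷ (Z₂, μ₂)`: a local isomorphism such that for almost every pair `x, y ∈ Z₁` one has
`x ∈ G₁ · y` if and only if `Ψ(x) ∈ G₂ · Ψ(y)`. -/
def IsStableOrbitEquiv (G₁ G₂ : Type*) {Z₁ Z₂ : Type*} [Group G₁] [Group G₂]
    [MulAction G₁ Z₁] [MulAction G₂ Z₂] [MeasurableSpace Z₁] [MeasurableSpace Z₂]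
    (μ₁ : Measure Z₁) (μ₂ : Measure Z₂) [SFinite μ₁] (Ψ : Z₁ → Z₂) : Prop :=
  IsLocalIso μ₁ μ₂ Ψ ∧
  ∀ᵐ p ∂(μ₁.prod μ₁),
    ((∃ g : G₁, g • p.2 = p.1) ↔ (∃ g : G₂, g • Ψ p.2 = Ψ p.1))

/-- Let `G₁ ↷ (Z₁, μ₁)` and `G₂ ↷ (Z₂, μ₂)` be free ergodic p.m.p.
actions of countable groups on standard probability spaces and let `Ψ : Z₁ → Z₂` be a
stable orbit equivalence.  If `Λ ≤ G₁` is a subgroup such that `Ψ(g · x) = Ψ(x)` for all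
`g ∈ Λ` and almost every `x`, then `Λ` is finite. -/
theorem finite_of_stableOrbitEquiv_invariant
    {G₁ G₂ Z₁ Z₂ : Type*} [Group G₁] [Countable G₁] [Group G₂] [Countable G₂]
    [MeasurableSpace Z₁] [StandardBorelSpace Z₁]
    [MeasurableSpace Z₂] [StandardBorelSpace Z₂]
    [MulAction G₁ Z₁] [MulAction G₂ Z₂]
    (μ₁ : Measure Z₁) (μ₂ : Measure Z₂)
    [IsProbabilityMeasure μ₁] [IsProbabilityMeasure μ₂]
    (hmp₁ : ∀ g : G₁, MeasurePreserving (fun x => g • x) μ₁ μ₁)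
    (hmp₂ : ∀ g : G₂, MeasurePreserving (fun x => g • x) μ₂ μ₂)
    (hfree₁ : ∀ g : G₁, g ≠ 1 → μ₁ {x | g • x = x} = 0)
    (hfree₂ : ∀ g : G₂, g ≠ 1 → μ₂ {x | g • x = x} = 0)
    (herg₁ : ∀ S : Set Z₁, MeasurableSet S → (∀ g : G₁, (fun x => g • x) ⁻¹' S = S) →
      μ₁ S = 0 ∨ μ₁ Sᶜ = 0)
    (herg₂ : ∀ S : Set Z₂, MeasurableSet S → (∀ g : G₂, (fun x => g • x) ⁻¹' S = S) →
      μ₂ S = 0 ∨ μ₂ Sᶜ = 0)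
    (Ψ : Z₁ → Z₂) (hΨ : IsStableOrbitEquiv G₁ G₂ μ₁ μ₂ Ψ)
    (Λ : Subgroup G₁) (hΛ : ∀ g ∈ Λ, ∀ᵐ x ∂μ₁, Ψ (g • x) = Ψ x) :
    Finite Λ := by
  by_contra hfin
  rw [not_finite_iff_infinite] at hfin
  obtain ⟨⟨hΨm, ι, hι, W, hWm, hWdisj, hWcompl, hW⟩, -⟩ := hΨ
  rcases isEmpty_or_nonempty ι with hι0 | hι0
  · rw [Set.iUnion_of_empty, Set.compl_empty] at hWcompl
    simp [measure_univ] at hWcompl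
  obtain ⟨n⟩ := hι0
  obtain ⟨hWne, hWinj, -, -, -, -⟩ := hW n
  have key : ∀ k : G₁, k ∈ Λ → k ≠ 1 → μ₁ ((fun x => k • x) ⁻¹' W n ∩ W n) = 0 := by
    intro k hk hk1
    have h1 : μ₁ {x | ¬ Ψ (k • x) = Ψ x} = 0 := hΛ k hk
    have h2 : μ₁ {x | k • x = x} = 0 := hfree₁ k hk1
    refine measure_mono_null ?_ (measure_union_null h1 h2)
    rintro x ⟨hx1, hx2⟩
    by_cases hψ : Ψ (k • x) = Ψ x
    · exact Or.inr (hWinj hx1 hx2 hψ)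
    · exact Or.inl hψ
  set f : Λ → Set Z₁ := fun g => (fun x => (g : G₁) • x) ⁻¹' W n with hf
  have hfm : ∀ g : Λ, MeasurableSet (f g) := fun g => (hmp₁ g).measurable (hWm n)
  have hfμ : ∀ g : Λ, μ₁ (f g) = μ₁ (W n) := fun g =>
    (hmp₁ g).measure_preimage (hWm n).nullMeasurableSet
  have hdisj : Pairwise (Function.onFun (MeasureTheory.AEDisjoint μ₁) f) := by
    intro g h hgh
    have hne : (g : G₁) * (h : G₁)⁻¹ ≠ 1 := by
      intro hc
      exact hgh (Subtype.ext (by rwa [mul_inv_eq_one] at hc))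
    have hmem : (g : G₁) * (h : G₁)⁻¹ ∈ Λ := mul_mem g.2 (inv_mem h.2)
    have heq : f g ∩ f h =
        (fun x => (h : G₁) • x) ⁻¹'
          ((fun y => ((g : G₁) * (h : G₁)⁻¹) • y) ⁻¹' W n ∩ W n) := by
      ext x
      simp only [hf, Set.mem_inter_iff, Set.mem_preimage, smul_smul, inv_mul_cancel_right]
    show μ₁ (f g ∩ f h) = 0
    rw [heq, (hmp₁ (h : G₁)).measure_preimage]
    · exact key _ hmem hne
    · exact (((hmp₁ _).measurable (hWm n)).inter (hWm n)).nullMeasurableSet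
  have hUnion := measure_iUnion₀ hdisj (fun g => (hfm g).nullMeasurableSet)
  rw [tsum_congr hfμ, ENNReal.tsum_const_eq_top_of_ne_zero hWne] at hUnion
  exact measure_ne_top μ₁ _ hUnion
end

section
/- Let K be a compact Hausdorff abelian topological group with a countable dense subgroup Λ, and let K₁, K₂ ≤ K be closed subgroups. If K₂ ⊆ ΛK₁ and the quotient group ΛK₁/K₂ is countable, then K₁ and K₂ are commensurate. -/
open Pointwise

/-- Key lemma: if a closed subgroup `C` of a compact Hausdorff topological group is covered by
countably many cosets of a closed subgroup `H`, then `H ∩ C` has finite index in `C`. -/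
theorem aux_relindex_ne_zero {K : Type*} [CommGroup K] [TopologicalSpace K] [IsTopologicalGroup K]
    [CompactSpace K] [T2Space K] (H C : Subgroup K)
    (hH : IsClosed (H : Set K)) (hC : IsClosed (C : Set K))
    {ι : Type*} [Countable ι] (g : ι → K)
    (hcov : (C : Set K) ⊆ ⋃ i, (g i) • (H : Set K)) :
    (H.subgroupOf C).index ≠ 0 := by
  haveI : CompactSpace C := isCompact_iff_compactSpace.mp hC.isCompact
  haveI : Nonempty C := ⟨1⟩
  set S : ι → Set C := fun i => Subtype.val ⁻¹' ((g i) • (H : Set K)) with hSdef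
  have hSclosed : ∀ i, IsClosed (S i) := fun i =>
    ((hH.smul (g i))).preimage continuous_subtype_val
  have hScover : ⋃ i, S i = Set.univ := by
    ext x
    simp only [Set.mem_iUnion, Set.mem_univ, iff_true]
    obtain ⟨_, ⟨i, rfl⟩, hx⟩ := hcov x.2
    exact ⟨i, hx⟩
  obtain ⟨i, x, hx⟩ := nonempty_interior_of_iUnion_of_closed hSclosed hScover
  have hxS : x ∈ S i := interior_subset hx
  obtain ⟨h₀, hh₀, hx0⟩ := hxS
  -- `S i` is the coset `x • (H.subgroupOf C)` inside `C`.
  have hSeq : S i = x • ((H.subgroupOf C : Subgroup C) : Set C) := by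
    ext y
    have hmem : y ∈ S i ↔ (g i)⁻¹ * (y : K) ∈ H := by
      simp only [hSdef, Set.mem_preimage, Set.mem_smul_set]
      constructor
      · rintro ⟨h, hh, hy⟩
        simpa [← hy, smul_eq_mul, mul_assoc] using hh
      · intro hy
        exact ⟨(g i)⁻¹ * (y : K), hy, by simp [smul_eq_mul, mul_assoc]⟩
    have hxval : (x : K) = g i * h₀ := by simpa [smul_eq_mul] using hx0.symm
    rw [hmem, mem_leftCoset_iff, SetLike.mem_coe, Subgroup.mem_subgroupOf]
    have : ((x⁻¹ * y : C) : K) = h₀⁻¹ * ((g i)⁻¹ * (y : K)) := by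
      push_cast [hxval]
      rw [mul_inv_rev, mul_assoc]
    rw [this]
    constructor
    · intro hy
      simpa using H.mul_mem (H.inv_mem hh₀) hy
    · intro hy
      simpa [mul_assoc] using H.mul_mem hh₀ hy
  -- hence the subgroup `H.subgroupOf C` has nonempty interior, so it is open.
  rw [hSeq, interior_smul] at hx
  obtain ⟨t, ht, hxt⟩ := hx
  have hopen : IsOpen ((H.subgroupOf C : Subgroup C) : Set C) :=
    Subgroup.isOpen_of_mem_nhds _ (mem_interior_iff_mem_nhds.mp ht)
  haveI : Finite (C ⧸ H.subgroupOf C) := (H.subgroupOf C).quotient_finite_of_isOpen hopen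
  exact Subgroup.index_ne_zero_of_finite

/-- In a commutative group `K`, the subgroup `AB = {ab : a ∈ A, b ∈ B}`. -/
def prodSubgroup {K : Type*} [CommGroup K] (A B : Subgroup K) : Subgroup K where
  carrier := {x | ∃ a ∈ A, ∃ b ∈ B, x = a * b}
  one_mem' := ⟨1, A.one_mem, 1, B.one_mem, (one_mul 1).symm⟩
  mul_mem' := by
    rintro x y ⟨a, ha, b, hb, rfl⟩ ⟨c, hc, d, hd, rfl⟩
    exact ⟨a * c, A.mul_mem ha hc, b * d, B.mul_mem hb hd, mul_mul_mul_comm a b c d⟩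
  inv_mem' := by
    rintro x ⟨a, ha, b, hb, rfl⟩
    exact ⟨a⁻¹, A.inv_mem ha, b⁻¹, B.inv_mem hb, mul_inv a b⟩

/-- Let `K` be a compact Hausdorff abelian topological group with a countable
dense subgroup `Λ`, and let `K₁, K₂ ≤ K` be closed subgroups.  If `K₂ ⊆ ΛK₁` and the quotient
`ΛK₁/K₂` is countable, then `K₁` and `K₂` are commensurate. -/
theorem commensurate_of_subset_prod_of_countable_quotient
    {K : Type*} [CommGroup K] [TopologicalSpace K] [IsTopologicalGroup K]
    [CompactSpace K] [T2Space K]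
    (Λ : Subgroup K) (hΛcount : Countable Λ) (hΛdense : Dense (Λ : Set K))
    (K₁ K₂ : Subgroup K) (h₁ : IsClosed (K₁ : Set K)) (h₂ : IsClosed (K₂ : Set K))
    (hsub : (K₂ : Set K) ⊆ (prodSubgroup Λ K₁ : Set K))
    (hcount : Countable
      ((prodSubgroup Λ K₁ : Subgroup K) ⧸ K₂.subgroupOf (prodSubgroup Λ K₁))) :
    Subgroup.Commensurable K₁ K₂ := by
  set P : Subgroup K := prodSubgroup Λ K₁ with hP
  constructor
  · -- K₁.relindex K₂ ≠ 0 : cover K₂ by cosets λ • K₁, λ ∈ Λ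
    refine aux_relindex_ne_zero K₁ K₂ h₁ h₂ (fun l : Λ => (l : K)) ?_
    intro k hk
    obtain ⟨a, ha, b, hb, rfl⟩ := hsub hk
    exact Set.mem_iUnion.mpr ⟨⟨a, ha⟩, ⟨b, hb, rfl⟩⟩
  · -- K₂.relindex K₁ ≠ 0 : cover K₁ by coset representatives of K₂ in P
    refine aux_relindex_ne_zero K₂ K₁ h₂ h₁
      (fun q : P ⧸ K₂.subgroupOf P => ((Quotient.out q : P) : K)) ?_
    intro k hk
    have hkP : k ∈ P := ⟨1, Λ.one_mem, k, hk, (one_mul k).symm⟩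
    set p : P := ⟨k, hkP⟩
    set q : P ⧸ K₂.subgroupOf P := QuotientGroup.mk p with hq
    refine Set.mem_iUnion.mpr ⟨q, ?_⟩
    have hout : QuotientGroup.mk (Quotient.out q) = q := QuotientGroup.out_eq' q
    rw [hq] at hout
    have hrel : (Quotient.out q)⁻¹ * p ∈ K₂.subgroupOf P :=
      QuotientGroup.eq.mp hout
    rw [Subgroup.mem_subgroupOf] at hrel
    refine ⟨((Quotient.out q)⁻¹ * p : P), hrel, ?_⟩
    push_cast
    simp [smul_eq_mul, mul_assoc]
    rfl
end

section
/- Let K be a compact Hausdorff abelian topological group with a countable dense subgroup Λ, and let K₁, K₂ ≤ K be closed subgroups. Assume that K₁ and K₂ are commensurate and that K₂ ⊆ ΛK₁. If Λ ∩ K₁ is dense in K₁, then Λ ∩ K₂ is dense in K₂. -/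
/-- Let `K` be a compact Hausdorff abelian topological group with a countable
dense subgroup `Λ`, and `K₁, K₂ ≤ K` closed subgroups.  Assume `K₁` and `K₂` are commensurate
and `K₂ ⊆ ΛK₁`.  If `Λ ∩ K₁` is dense in `K₁`, then `Λ ∩ K₂` is dense in `K₂`. -/
theorem dense_intersection_of_commensurate
    {K : Type*} [CommGroup K] [TopologicalSpace K] [IsTopologicalGroup K]
    [CompactSpace K] [T2Space K]
    (Λ : Subgroup K) (hΛcount : Countable Λ) (hΛdense : Dense (Λ : Set K))
    (K₁ K₂ : Subgroup K) (h₁ : IsClosed (K₁ : Set K)) (h₂ : IsClosed (K₂ : Set K))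
    (hcomm : Subgroup.Commensurable K₁ K₂)
    (hsub : (K₂ : Set K) ⊆ (prodSubgroup Λ K₁ : Set K))
    (hdense₁ : (K₁ : Set K) ⊆ closure ((Λ ⊓ K₁ : Subgroup K) : Set K)) :
    (K₂ : Set K) ⊆ closure ((Λ ⊓ K₂ : Subgroup K) : Set K) := by
  -- Let `H = K₂ ⊔ K₁`.
  set H : Subgroup K := K₂ ⊔ K₁ with hH
  have hK₂H : K₂ ≤ H := le_sup_left
  have hK₁H : K₁ ≤ H := le_sup_right
  -- `K₂` has finite index in `H`.
  have hfin : (K₂.subgroupOf H).FiniteIndex := by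
    constructor
    rw [← Subgroup.relIndex]
    rw [hH, Subgroup.relIndex_sup_left]
    exact hcomm.2
  -- `K₂` is closed in `H`, hence open in `H`.
  have hclosed : IsClosed ((K₂.subgroupOf H : Subgroup H) : Set H) := by
    have : ((K₂.subgroupOf H : Subgroup H) : Set H) = (Subtype.val : H → K) ⁻¹' K₂ := rfl
    rw [this]
    exact h₂.preimage continuous_subtype_val
  have hopen : IsOpen ((K₂.subgroupOf H : Subgroup H) : Set H) :=
    Subgroup.isOpen_of_isClosed_of_finiteIndex _ hclosed
  obtain ⟨U, hUopen, hUeq⟩ := isOpen_induced_iff.mp hopen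
  -- `U` is open in `K`, and `U ∩ H ⊆ K₂`, while `K₂ ⊆ U`.
  have hUH : ∀ y : K, y ∈ H → y ∈ U → y ∈ K₂ := by
    intro y hy hyU
    have : (⟨y, hy⟩ : H) ∈ (Subtype.val : H → K) ⁻¹' U := hyU
    rw [hUeq] at this
    exact this
  have hK₂U : ∀ y : K, y ∈ K₂ → y ∈ U := by
    intro y hy
    have : (⟨y, hK₂H hy⟩ : H) ∈ K₂.subgroupOf H := hy
    rw [← SetLike.mem_coe, ← hUeq] at this
    exact this
  -- Main argument.
  intro x hx
  obtain ⟨l, hl, k, hk, hxlk⟩ := hsub hx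
  rw [mem_closure_iff]
  intro V hVopen hxV
  -- `k ∈ K₁` is in the closure of `Λ ⊓ K₁`.
  have hkcl := hdense₁ hk
  rw [mem_closure_iff] at hkcl
  have hW : IsOpen ((fun y => l * y) ⁻¹' (V ∩ U)) :=
    (hVopen.inter hUopen).preimage (continuous_const.mul continuous_id)
  have hkW : k ∈ (fun y => l * y) ⁻¹' (V ∩ U) := by
    simp only [Set.mem_preimage]
    rw [← hxlk]
    exact ⟨hxV, hK₂U x hx⟩
  obtain ⟨μ, hμW, hμΛK₁⟩ := hkcl _ hW hkW
  obtain ⟨hμΛ, hμK₁⟩ := hμΛK₁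
  refine ⟨l * μ, hμW.1, ?_, ?_⟩
  · -- `l * μ ∈ Λ`
    exact Λ.mul_mem hl hμΛ
  · -- `l * μ ∈ K₂` since `l * μ = x * (k⁻¹ * μ) ∈ H` and `l * μ ∈ U`.
    have hlμH : l * μ ∈ H := by
      have : l * μ = x * (k⁻¹ * μ) := by
        rw [hxlk]; group
      rw [this]
      exact H.mul_mem (hK₂H hx) (hK₁H (K₁.mul_mem (K₁.inv_mem hk) hμK₁))
    exact hUH _ hlμH hμW.2
end

section
/- Let K be a compact Hausdorff abelian topological group with a countable dense subgroup Λ, and let K₁, K₂ ≤ K be closed subgroups such that Λ ∩ Kᵢ is dense in Kᵢ for i = 1, 2. Then the following statements are equivalent: (a) Λ ∩ K₁ and Λ ∩ K₂ are commensurate; (b) K₁ and K₂ are commensurate; (c) ΛK₁ = ΛK₂. -/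
/-- If `H` has finite relative index in `G`, then `G` is covered by finitely many cosets
of `H` with representatives in `G`. -/
private lemma cover_of_relIndex_ne_zero {K : Type*} [CommGroup K] (H G : Subgroup K)
    (h : H.relIndex G ≠ 0) :
    ∃ T : Finset K, (∀ t ∈ T, t ∈ G) ∧ ∀ k ∈ G, ∃ t ∈ T, t⁻¹ * k ∈ H := by
  classical
  rw [Subgroup.relIndex, Subgroup.index_eq_card] at h
  have hfin : Finite (↥G ⧸ H.subgroupOf G) := (Nat.card_ne_zero.mp h).2
  have := Fintype.ofFinite (↥G ⧸ H.subgroupOf G)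
  refine ⟨Finset.univ.image (fun q : ↥G ⧸ H.subgroupOf G => ((Quotient.out q : ↥G) : K)),
    ?_, ?_⟩
  · rintro t ht
    simp only [Finset.mem_image] at ht
    obtain ⟨q, -, rfl⟩ := ht
    exact (Quotient.out q).2
  · intro k hk
    set q := QuotientGroup.mk (s := H.subgroupOf G) ⟨k, hk⟩ with hq
    refine ⟨((Quotient.out q : ↥G) : K), Finset.mem_image_of_mem _ (Finset.mem_univ q), ?_⟩
    have h1 : QuotientGroup.mk (s := H.subgroupOf G) (Quotient.out q)
        = QuotientGroup.mk ⟨k, hk⟩ := QuotientGroup.out_eq' q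
    have h2 : (Quotient.out q)⁻¹ * (⟨k, hk⟩ : ↥G) ∈ H.subgroupOf G :=
      QuotientGroup.eq.mp h1
    simpa [Subgroup.mem_subgroupOf] using h2

/-- Conversely, a finite cover by cosets gives finite relative index. -/
private lemma relIndex_ne_zero_of_cover {K : Type*} [CommGroup K] (H G : Subgroup K)
    (T : Finset K) (hTG : ∀ t ∈ T, t ∈ G) (hcov : ∀ k ∈ G, ∃ t ∈ T, t⁻¹ * k ∈ H) :
    H.relIndex G ≠ 0 := by
  classical
  have hsurj : Function.Surjective
      (fun t : {t // t ∈ T} => (QuotientGroup.mk ⟨(t : K), hTG t t.2⟩ : ↥G ⧸ H.subgroupOf G)) := by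
    intro q
    obtain ⟨⟨k, hk⟩, rfl⟩ := QuotientGroup.mk_surjective q
    obtain ⟨t, ht, hth⟩ := hcov k hk
    refine ⟨⟨t, ht⟩, ?_⟩
    exact QuotientGroup.eq.mpr (by simpa [Subgroup.mem_subgroupOf] using hth)
  have : Finite (↥G ⧸ H.subgroupOf G) := Finite.of_surjective _ hsurj
  rw [Subgroup.relIndex]
  exact Subgroup.index_ne_zero_of_finite

/-- A finite-cosets cover of a set persists to its closure if the subgroup is closed. -/
private lemma cover_closure {K : Type*} [CommGroup K] [TopologicalSpace K] [IsTopologicalGroup K]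
    (C : Subgroup K) (hC : IsClosed (C : Set K)) (D : Set K)
    (T : Finset K) (hcov : ∀ k ∈ D, ∃ t ∈ T, t⁻¹ * k ∈ C) :
    ∀ k ∈ closure D, ∃ t ∈ T, t⁻¹ * k ∈ C := by
  intro k hk
  by_contra hcon
  push_neg at hcon
  have hopen : IsOpen (⋂ t ∈ T, {x : K | t⁻¹ * x ∉ (C : Set K)}) := by
    refine isOpen_biInter_finset fun t _ => ?_
    exact hC.isOpen_compl.preimage (continuous_const.mul continuous_id)
  have hmem : k ∈ ⋂ t ∈ T, {x : K | t⁻¹ * x ∉ (C : Set K)} := by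
    simp only [Set.mem_iInter, Set.mem_setOf_eq]
    exact fun t ht => hcon t ht
  obtain ⟨x, hxW, hxD⟩ := mem_closure_iff.mp hk _ hopen hmem
  obtain ⟨t, ht, htc⟩ := hcov x hxD
  exact (Set.mem_iInter₂.mp hxW t ht) htc

/-- If `K₂` has finite relative index in `K₁` (both closed, with `Λ ⊓ K₁` dense in `K₁`),
then `K₁ ⊆ Λ K₂`. -/
private lemma subset_prod {K : Type*} [CommGroup K] [TopologicalSpace K] [IsTopologicalGroup K]
    (Λ K₁ K₂ : Subgroup K) (h₁ : IsClosed (K₁ : Set K)) (h₂ : IsClosed (K₂ : Set K))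
    (hdense₁ : (K₁ : Set K) ⊆ closure ((Λ ⊓ K₁ : Subgroup K) : Set K))
    (hrel : K₂.relIndex K₁ ≠ 0) :
    (K₁ : Set K) ⊆ (prodSubgroup Λ K₂ : Set K) := by
  classical
  have hrel' : (K₂ ⊓ K₁).relIndex K₁ ≠ 0 := by
    rwa [Subgroup.inf_relIndex_right]
  obtain ⟨T, hTG, hcov⟩ := cover_of_relIndex_ne_zero (K₂ ⊓ K₁) K₁ hrel'
  have hCclosed : IsClosed ((K₂ ⊓ K₁ : Subgroup K) : Set K) := by
    rw [Subgroup.coe_inf]; exact h₂.inter h₁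
  -- The union of the "bad" cosets (reps not in K₂)
  set C : Set K := ⋃ t ∈ T.filter (fun t => t ∉ K₂),
      {x : K | t⁻¹ * x ∈ ((K₂ ⊓ K₁ : Subgroup K) : Set K)} with hC
  have hCcl : IsClosed C := by
    refine Set.Finite.isClosed_biUnion (Finset.finite_toSet _) fun t _ => ?_
    exact hCclosed.preimage (continuous_const.mul continuous_id)
  have hone : (1 : K) ∉ C := by
    intro h1
    simp only [hC, Set.mem_iUnion, Finset.mem_filter, Set.mem_setOf_eq] at h1
    obtain ⟨t, ⟨htT, htK₂⟩, htc⟩ := h1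
    rw [mul_one] at htc
    exact htK₂ (K₂.inv_mem_iff.mp ((Subgroup.mem_inf.mp htc).1))
  -- points of K₁ outside C lie in K₂
  have hkey : ∀ x ∈ K₁, x ∉ C → x ∈ K₂ := by
    intro x hx hxC
    obtain ⟨t, htT, htc⟩ := hcov x hx
    by_cases htK₂ : t ∈ K₂
    · have : t⁻¹ * x ∈ K₂ := (Subgroup.mem_inf.mp htc).1
      simpa using K₂.mul_mem htK₂ this
    · exact absurd (Set.mem_biUnion (Finset.mem_filter.mpr ⟨htT, htK₂⟩) htc) hxC
  intro k hk
  -- use density: find λ ∈ Λ ⊓ K₁ with k⁻¹λ ∉ C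
  have hV : IsOpen {x : K | k⁻¹ * x ∉ C} :=
    hCcl.isOpen_compl.preimage (continuous_const.mul continuous_id)
  have hkV : k ∈ {x : K | k⁻¹ * x ∉ C} := by
    simp only [Set.mem_setOf_eq, inv_mul_cancel]
    exact hone
  obtain ⟨l, hlV, hlΛ⟩ := mem_closure_iff.mp (hdense₁ hk) _ hV hkV
  obtain ⟨hlΛ', hlK₁⟩ := Subgroup.mem_inf.mp hlΛ
  have hmem : k⁻¹ * l ∈ K₂ :=
    hkey _ (K₁.mul_mem (K₁.inv_mem hk) hlK₁) hlV
  exact ⟨l, hlΛ', l⁻¹ * k, by simpa using K₂.inv_mem hmem, (mul_inv_cancel_left l k).symm⟩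

/-- Baire-category step: if `K₂ ⊆ Λ K₁` with `K₁, K₂` closed, then `K₁` has finite
relative index in `K₂`. -/
private lemma relIndex_ne_zero_of_prod {K : Type*} [CommGroup K] [TopologicalSpace K]
    [IsTopologicalGroup K] [CompactSpace K] [T2Space K]
    (Λ K₁ K₂ : Subgroup K) (hΛcount : Countable Λ)
    (h₁ : IsClosed (K₁ : Set K)) (h₂ : IsClosed (K₂ : Set K))
    (hc : (K₂ : Set K) ⊆ (prodSubgroup Λ K₁ : Set K)) :
    K₁.relIndex K₂ ≠ 0 := by
  have hK₂comp : CompactSpace ↥K₂ := isCompact_iff_compactSpace.mp h₂.isCompact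
  -- the closed sets (λ K₁) ∩ K₂, as subsets of K₂
  set f : ↥Λ → Set ↥K₂ := fun l => {x : ↥K₂ | (l : K)⁻¹ * (x : K) ∈ K₁} with hf
  have hfc : ∀ l, IsClosed (f l) := fun l =>
    h₁.preimage (continuous_const.mul continuous_subtype_val)
  have hfU : ⋃ l, f l = Set.univ := by
    ext x
    simp only [Set.mem_iUnion, Set.mem_univ, iff_true]
    obtain ⟨a, ha, b, hb, hx⟩ := hc x.2
    exact ⟨⟨a, ha⟩, by simp [hf, hx, hb]⟩
  obtain ⟨l₀, x₀, hx₀⟩ := nonempty_interior_of_iUnion_of_closed hfc hfU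
  have hx₀f : (l₀ : K)⁻¹ * (x₀ : K) ∈ K₁ := by
    have := interior_subset hx₀
    simpa [hf, Set.mem_setOf_eq] using this
  -- translate to see that K₁.subgroupOf K₂ is a neighborhood of 1
  have hnhds : ((K₁.subgroupOf K₂ : Subgroup ↥K₂) : Set ↥K₂) ∈ nhds (1 : ↥K₂) := by
    have hcont : Continuous (fun g : ↥K₂ => x₀ * g) := continuous_const.mul continuous_id
    have hpre : IsOpen ((fun g : ↥K₂ => x₀ * g) ⁻¹' interior (f l₀)) :=
      isOpen_interior.preimage hcont
    have hmem1 : (1 : ↥K₂) ∈ (fun g : ↥K₂ => x₀ * g) ⁻¹' interior (f l₀) := by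
      simpa using hx₀
    refine Filter.mem_of_superset (hpre.mem_nhds hmem1) ?_
    intro g hg
    have hgf : (l₀ : K)⁻¹ * ((x₀ * g : ↥K₂) : K) ∈ K₁ := by
      have := interior_subset hg
      simpa [hf, Set.mem_setOf_eq] using this
    have hmul : ((l₀ : K)⁻¹ * (x₀ : K)) * (g : K) ∈ K₁ := by
      simpa [mul_assoc] using hgf
    have heq : ((l₀ : K)⁻¹ * (x₀ : K))⁻¹ * (((l₀ : K)⁻¹ * (x₀ : K)) * (g : K)) = (g : K) := by
      group
    have hgK₁ : (g : K) ∈ K₁ := by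
      rw [← heq]
      exact K₁.mul_mem (K₁.inv_mem hx₀f) hmul
    exact hgK₁
  have hopen : IsOpen ((K₁.subgroupOf K₂ : Subgroup ↥K₂) : Set ↥K₂) :=
    Subgroup.isOpen_of_mem_nhds _ hnhds
  have hfin : Finite (↥K₂ ⧸ K₁.subgroupOf K₂) :=
    Subgroup.quotient_finite_of_isOpen _ hopen
  rw [Subgroup.relIndex]
  exact Subgroup.index_ne_zero_of_finite

/-- Let `K` be a compact Hausdorff abelian topological group with a countable
dense subgroup `Λ`, and let `K₁, K₂ ≤ K` be closed subgroups such that `Λ ∩ Kᵢ` is dense in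
`Kᵢ` for `i = 1, 2`.  Then the following are equivalent: (a) `Λ ∩ K₁` and `Λ ∩ K₂` are
commensurate; (b) `K₁` and `K₂` are commensurate; (c) `ΛK₁ = ΛK₂`. -/
theorem commensurable_tfae
    {K : Type*} [CommGroup K] [TopologicalSpace K] [IsTopologicalGroup K]
    [CompactSpace K] [T2Space K]
    (Λ : Subgroup K) (hΛcount : Countable Λ) (hΛdense : Dense (Λ : Set K))
    (K₁ K₂ : Subgroup K) (h₁ : IsClosed (K₁ : Set K)) (h₂ : IsClosed (K₂ : Set K))
    (hdense₁ : (K₁ : Set K) ⊆ closure ((Λ ⊓ K₁ : Subgroup K) : Set K))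
    (hdense₂ : (K₂ : Set K) ⊆ closure ((Λ ⊓ K₂ : Subgroup K) : Set K)) :
    (Subgroup.Commensurable (Λ ⊓ K₁) (Λ ⊓ K₂) ↔ Subgroup.Commensurable K₁ K₂) ∧
    (Subgroup.Commensurable K₁ K₂ ↔ prodSubgroup Λ K₁ = prodSubgroup Λ K₂) := by
  -- (b) → (a)
  have hba : Subgroup.Commensurable K₁ K₂ → Subgroup.Commensurable (Λ ⊓ K₁) (Λ ⊓ K₂) := by
    rintro ⟨hr1, hr2⟩
    constructor
    · have h1 : (Λ ⊓ K₁) ⊓ (Λ ⊓ K₂) = K₁ ⊓ (Λ ⊓ K₂) := by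
        ext x; simp only [Subgroup.mem_inf]; tauto
      rw [← Subgroup.inf_relIndex_right, h1, Subgroup.inf_relIndex_right]
      intro h0
      exact hr1 (Subgroup.relIndex_eq_zero_of_le_right inf_le_right h0)
    · have h1 : (Λ ⊓ K₂) ⊓ (Λ ⊓ K₁) = K₂ ⊓ (Λ ⊓ K₁) := by
        ext x; simp only [Subgroup.mem_inf]; tauto
      rw [← Subgroup.inf_relIndex_right, h1, Subgroup.inf_relIndex_right]
      intro h0
      exact hr2 (Subgroup.relIndex_eq_zero_of_le_right inf_le_right h0)
  -- (a) → (b), via the closure-of-cosets argument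
  have hab : Subgroup.Commensurable (Λ ⊓ K₁) (Λ ⊓ K₂) → Subgroup.Commensurable K₁ K₂ := by
    rintro ⟨hr1, hr2⟩
    have hK₂cl : IsClosed ((K₂ : Subgroup K) : Set K) := h₂
    constructor
    · -- K₁.relIndex K₂ ≠ 0
      obtain ⟨T, hTG, hcov⟩ := cover_of_relIndex_ne_zero (Λ ⊓ K₁) (Λ ⊓ K₂) hr1
      have hcov' : ∀ k ∈ ((Λ ⊓ K₂ : Subgroup K) : Set K), ∃ t ∈ T, t⁻¹ * k ∈ K₁ := by
        intro k hk
        obtain ⟨t, ht, htc⟩ := hcov k hk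
        exact ⟨t, ht, (Subgroup.mem_inf.mp htc).2⟩
      have hcl := cover_closure K₁ h₁ _ T hcov'
      refine relIndex_ne_zero_of_cover K₁ K₂ T (fun t ht => (Subgroup.mem_inf.mp (hTG t ht)).2)
        (fun k hk => hcl k (hdense₂ hk))
    · obtain ⟨T, hTG, hcov⟩ := cover_of_relIndex_ne_zero (Λ ⊓ K₂) (Λ ⊓ K₁) hr2
      have hcov' : ∀ k ∈ ((Λ ⊓ K₁ : Subgroup K) : Set K), ∃ t ∈ T, t⁻¹ * k ∈ K₂ := by
        intro k hk
        obtain ⟨t, ht, htc⟩ := hcov k hk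
        exact ⟨t, ht, (Subgroup.mem_inf.mp htc).2⟩
      have hcl := cover_closure K₂ h₂ _ T hcov'
      refine relIndex_ne_zero_of_cover K₂ K₁ T (fun t ht => (Subgroup.mem_inf.mp (hTG t ht)).2)
        (fun k hk => hcl k (hdense₁ hk))
  -- (b) → (c)
  have hbc : Subgroup.Commensurable K₁ K₂ → prodSubgroup Λ K₁ = prodSubgroup Λ K₂ := by
    rintro ⟨hr1, hr2⟩
    have hsub₁ : (K₁ : Set K) ⊆ (prodSubgroup Λ K₂ : Set K) :=
      subset_prod Λ K₁ K₂ h₁ h₂ hdense₁ hr2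
    have hsub₂ : (K₂ : Set K) ⊆ (prodSubgroup Λ K₁ : Set K) :=
      subset_prod Λ K₂ K₁ h₂ h₁ hdense₂ hr1
    apply le_antisymm
    · rintro x ⟨a, ha, b, hb, rfl⟩
      obtain ⟨c, hc, d, hd, hbd⟩ := hsub₁ hb
      exact ⟨a * c, Λ.mul_mem ha hc, d, hd, by rw [hbd, mul_assoc]⟩
    · rintro x ⟨a, ha, b, hb, rfl⟩
      obtain ⟨c, hc, d, hd, hbd⟩ := hsub₂ hb
      exact ⟨a * c, Λ.mul_mem ha hc, d, hd, by rw [hbd, mul_assoc]⟩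
  -- (c) → (b)
  have hcb : prodSubgroup Λ K₁ = prodSubgroup Λ K₂ → Subgroup.Commensurable K₁ K₂ := by
    intro hc
    have hsub₂ : (K₂ : Set K) ⊆ (prodSubgroup Λ K₁ : Set K) := by
      intro x hx
      have : x ∈ prodSubgroup Λ K₂ := ⟨1, Λ.one_mem, x, hx, (one_mul x).symm⟩
      rw [← hc] at this
      exact this
    have hsub₁ : (K₁ : Set K) ⊆ (prodSubgroup Λ K₂ : Set K) := by
      intro x hx
      have : x ∈ prodSubgroup Λ K₁ := ⟨1, Λ.one_mem, x, hx, (one_mul x).symm⟩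
      rw [hc] at this
      exact this
    exact ⟨relIndex_ne_zero_of_prod Λ K₁ K₂ hΛcount h₁ h₂ hsub₂,
      relIndex_ne_zero_of_prod Λ K₂ K₁ hΛcount h₂ h₁ hsub₁⟩
  exact ⟨⟨hab, hba⟩, ⟨hbc, fun hc => hcb hc⟩⟩
end

section
/- Let T ⊆ ℕ^{<ℕ} be a tree. An element g ∈ ℚ^(ℕ^{<ℕ}) belongs to G(T) if and only if the following three conditions hold: (1) g_σ = 0 for every σ ∉ T; (2) for every σ ∈ T and every prime p such that p ≠ p_{2|σ|}, p ≠ p_{2|σ|+1}, and (if |σ| ≥ 1) p ≠ p_{2|σ|−1}, the rational number g_σ is p-integral; (3) for every σ ∈ T, the rational number g_σ + Σ_{b∈ℕ} g_{σb} is p_{2|σ|+1}-integral. -/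
/-- A tree of finite sequences of natural numbers: a set of lists closed under
taking initial segments. -/
def IsTree (T : Set (List ℕ)) : Prop :=
  ∀ σ ∈ T, ∀ τ : List ℕ, τ <+: σ → τ ∈ T

/-- `primeN n` is the `n`-th prime `p_n` (so `p₀ = 2 < p₁ = 3 < ⋯`). -/
noncomputable def primeN (n : ℕ) : ℕ := Nat.nth Nat.Prime n

/-- The generating set of Hjorth's group `G(T)`:
`{p_{2|σ|}^{-k} δ_σ : σ ∈ T, k ∈ ℕ} ∪ {p_{2|σ|-1}^{-k} (δ_σ - δ_{σ⁻}) : σ ∈ T, |σ| ≥ 1, k ∈ ℕ}`. -/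
noncomputable def hjorthGenSet (T : Set (List ℕ)) : Set (List ℕ →₀ ℚ) :=
  {f | ∃ σ ∈ T, ∃ k : ℕ,
      f = ((primeN (2 * σ.length) : ℚ) ^ k)⁻¹ • Finsupp.single σ (1 : ℚ)} ∪
  {f | ∃ σ ∈ T, σ ≠ [] ∧ ∃ k : ℕ,
      f = ((primeN (2 * σ.length - 1) : ℚ) ^ k)⁻¹ •
        (Finsupp.single σ (1 : ℚ) - Finsupp.single σ.dropLast (1 : ℚ))}

/-- Hjorth's group `G(T) ≤ ℚ^(ℕ^{<ℕ})` associated with a tree `T`. -/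
noncomputable def hjorthGroup (T : Set (List ℕ)) : AddSubgroup (List ℕ →₀ ℚ) :=
  AddSubgroup.closure (hjorthGenSet T)

/-- A rational number is `p`-integral if `p` does not divide its denominator. -/
def PIntegral (p : ℕ) (q : ℚ) : Prop := ¬ (p ∣ q.den)



/-! ### Basic prime and integrality lemmas -/

lemma primeN_prime (n : ℕ) : (primeN n).Prime := Nat.prime_nth_prime n

lemma primeN_inj : Function.Injective primeN :=
  Nat.nth_injective Nat.infinite_setOf_prime

lemma pInt_zero {p : ℕ} (hp : p.Prime) : PIntegral p 0 := by
  simpa [PIntegral] using hp.one_lt.ne'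

lemma pInt_add {p : ℕ} (hp : p.Prime) {q r : ℚ} (hq : PIntegral p q) (hr : PIntegral p r) :
    PIntegral p (q + r) := by
  intro h
  rcases (Nat.Prime.dvd_mul hp).mp (h.trans (Rat.add_den_dvd q r)) with h' | h'
  exacts [hq h', hr h']

lemma pInt_neg {p : ℕ} {q : ℚ} (hq : PIntegral p q) : PIntegral p (-q) := by
  simpa [PIntegral, Rat.den_neg_eq_den] using hq

lemma pInt_sub {p : ℕ} (hp : p.Prime) {q r : ℚ} (hq : PIntegral p q) (hr : PIntegral p r) :
    PIntegral p (q - r) := by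
  simpa [sub_eq_add_neg] using pInt_add hp hq (pInt_neg hr)

lemma pInt_sum {p : ℕ} (hp : p.Prime) {ι : Type*} (s : Finset ι) (f : ι → ℚ)
    (h : ∀ i ∈ s, PIntegral p (f i)) : PIntegral p (∑ i ∈ s, f i) := by
  classical
  induction s using Finset.induction_on with
  | empty => simpa using pInt_zero hp
  | insert _ _ hnot ih =>
    rename_i a s
    rw [Finset.sum_insert hnot]
    exact pInt_add hp (h a (Finset.mem_insert_self a s))
      (ih fun i hi => h i (Finset.mem_insert_of_mem hi))

lemma pInt_of_den_primes {p q : ℕ} (hq : q.Prime) {x : ℚ}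
    (hden : ∀ s, s.Prime → s ∣ x.den → s = p) (hne : q ≠ p) : PIntegral q x :=
  fun h => hne (hden q hq h)

/-! ### finsum helpers -/

lemma finsum_nat_eq_range_sum {f : ℕ → ℚ} {M : ℕ} (h : ∀ b, f b ≠ 0 → b < M) :
    ∑ᶠ b, f b = ∑ b ∈ Finset.range M, f b :=
  finsum_eq_sum_of_support_subset f
    (fun b hb => Finset.mem_coe.mpr (Finset.mem_range.mpr (h b hb)))

noncomputable def childBound (g : List ℕ →₀ ℚ) : ℕ := g.support.sup (fun σ => σ.sum + 1)

lemma lt_childBound {g : List ℕ →₀ ℚ} {τ : List ℕ} {b : ℕ} (h : g (τ ++ [b]) ≠ 0) :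
    b < childBound g := by
  have hmem : τ ++ [b] ∈ g.support := Finsupp.mem_support_iff.mpr h
  have h2 := Finset.le_sup (f := fun σ : List ℕ => σ.sum + 1) hmem
  simp only [List.sum_append, List.sum_cons, List.sum_nil] at h2
  unfold childBound
  omega

lemma finsum_children {g : List ℕ →₀ ℚ} (τ : List ℕ) {M : ℕ} (hM : childBound g ≤ M) :
    ∑ᶠ b, g (τ ++ [b]) = ∑ b ∈ Finset.range M, g (τ ++ [b]) :=
  finsum_nat_eq_range_sum (fun _ hb => lt_of_lt_of_le (lt_childBound hb) hM)

lemma finsum_single_children (ρ τ : List ℕ) (x : ℚ) :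
    ∑ᶠ b : ℕ, (Finsupp.single ρ x) (τ ++ [b]) = if ρ ≠ [] ∧ ρ.dropLast = τ then x else 0 := by
  classical
  by_cases h : ρ ≠ [] ∧ ρ.dropLast = τ
  · rw [if_pos h]
    obtain ⟨hne, hd⟩ := h
    have hρ : ρ = τ ++ [ρ.getLast hne] := by
      have h3 := List.dropLast_append_getLast hne
      rw [hd] at h3
      exact h3.symm
    rw [finsum_eq_single _ (ρ.getLast hne)]
    · rw [Finsupp.single_apply, if_pos hρ]
    · intro b hb
      rw [Finsupp.single_apply, if_neg]
      intro hc
      exact hb (by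
        have := hρ.symm.trans hc
        simpa using (List.append_cancel_left this).symm)
  · rw [if_neg h]
    apply finsum_eq_zero_of_forall_eq_zero
    intro b
    rw [Finsupp.single_apply, if_neg]
    intro hc
    exact h ⟨by simp [hc], by simp [hc]⟩

/-! ### finsum of children for sums/differences -/

lemma finsum_children_add (g₁ g₂ : List ℕ →₀ ℚ) (τ : List ℕ) :
    ∑ᶠ b, (g₁ + g₂) (τ ++ [b]) = (∑ᶠ b, g₁ (τ ++ [b])) + ∑ᶠ b, g₂ (τ ++ [b]) := by
  set M := max (childBound g₁) (childBound g₂) with hM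
  have h1 : ∑ᶠ b, (g₁ + g₂) (τ ++ [b]) = ∑ b ∈ Finset.range M, (g₁ + g₂) (τ ++ [b]) := by
    apply finsum_nat_eq_range_sum
    intro b hb
    rw [Finsupp.add_apply] at hb
    rcases (by by_contra hc; push_neg at hc; simp [hc.1, hc.2] at hb :
        g₁ (τ ++ [b]) ≠ 0 ∨ g₂ (τ ++ [b]) ≠ 0) with h | h
    · exact lt_of_lt_of_le (lt_childBound h) (le_max_left _ _)
    · exact lt_of_lt_of_le (lt_childBound h) (le_max_right _ _)
  rw [h1, finsum_children (M := M) τ (le_max_left _ _), finsum_children (M := M) τ (le_max_right _ _)]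
  simp [Finsupp.add_apply, Finset.sum_add_distrib]

lemma finsum_children_neg (g : List ℕ →₀ ℚ) (τ : List ℕ) :
    ∑ᶠ b, (-g) (τ ++ [b]) = - ∑ᶠ b, g (τ ++ [b]) := by
  have h1 : ∑ᶠ b, (-g) (τ ++ [b]) = ∑ b ∈ Finset.range (childBound g), (-g) (τ ++ [b]) := by
    apply finsum_nat_eq_range_sum
    intro b hb
    rw [Finsupp.neg_apply, neg_ne_zero] at hb
    exact lt_childBound hb
  rw [h1, finsum_children τ (le_refl (childBound g))]
  simp [Finsupp.neg_apply]

lemma finsum_children_sub (g₁ g₂ : List ℕ →₀ ℚ) (τ : List ℕ) :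
    ∑ᶠ b, (g₁ - g₂) (τ ++ [b]) = (∑ᶠ b, g₁ (τ ++ [b])) - ∑ᶠ b, g₂ (τ ++ [b]) := by
  rw [sub_eq_add_neg, finsum_children_add, finsum_children_neg, sub_eq_add_neg]

/-! ### the subgroup of conditions -/

noncomputable def condGroup (T : Set (List ℕ)) : AddSubgroup (List ℕ →₀ ℚ) where
  carrier := {g | (∀ σ : List ℕ, σ ∉ T → g σ = 0) ∧
      (∀ σ ∈ T, ∀ p : ℕ, p.Prime → p ≠ primeN (2 * σ.length) →
          p ≠ primeN (2 * σ.length + 1) →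
          (σ ≠ [] → p ≠ primeN (2 * σ.length - 1)) →
          PIntegral p (g σ)) ∧
      (∀ σ ∈ T, PIntegral (primeN (2 * σ.length + 1))
          (g σ + ∑ᶠ b : ℕ, g (σ ++ [b])))}
  zero_mem' := by
    refine ⟨fun σ _ => rfl, fun σ _ p hp _ _ _ => by simpa using pInt_zero hp, fun σ _ => ?_⟩
    have : ∑ᶠ b : ℕ, (0 : List ℕ →₀ ℚ) (σ ++ [b]) = 0 :=
      finsum_eq_zero_of_forall_eq_zero fun _ => rfl
    rw [this]
    simpa using pInt_zero (primeN_prime _)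
  add_mem' := by
    rintro g₁ g₂ ⟨h11, h12, h13⟩ ⟨h21, h22, h23⟩
    refine ⟨fun σ hσ => by simp [Finsupp.add_apply, h11 σ hσ, h21 σ hσ],
      fun σ hσ p hp hA hB hC => ?_, fun σ hσ => ?_⟩
    · rw [Finsupp.add_apply]
      exact pInt_add hp (h12 σ hσ p hp hA hB hC) (h22 σ hσ p hp hA hB hC)
    · rw [finsum_children_add, Finsupp.add_apply]
      have : g₁ σ + g₂ σ + ((∑ᶠ b, g₁ (σ ++ [b])) + ∑ᶠ b, g₂ (σ ++ [b])) =
          (g₁ σ + ∑ᶠ b, g₁ (σ ++ [b])) + (g₂ σ + ∑ᶠ b, g₂ (σ ++ [b])) := by ring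
      rw [this]
      exact pInt_add (primeN_prime _) (h13 σ hσ) (h23 σ hσ)
  neg_mem' := by
    rintro g ⟨h1, h2, h3⟩
    refine ⟨fun σ hσ => by simp [Finsupp.neg_apply, h1 σ hσ],
      fun σ hσ p hp hA hB hC => ?_, fun σ hσ => ?_⟩
    · rw [Finsupp.neg_apply]
      exact pInt_neg (h2 σ hσ p hp hA hB hC)
    · rw [finsum_children_neg, Finsupp.neg_apply, ← neg_add]
      exact pInt_neg (h3 σ hσ)

/-! ### denominators of generator coefficients -/

lemma den_inv_pow (p k : ℕ) (hp : p.Prime) : (((p : ℚ)) ^ k)⁻¹.den = p ^ k := by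
  rw [← Nat.cast_pow]
  exact Rat.inv_natCast_den_of_pos (pow_pos hp.pos k)

lemma den_primes_inv_pow (p k : ℕ) (hp : p.Prime) :
    ∀ s, s.Prime → s ∣ (((p : ℚ)) ^ k)⁻¹.den → s = p := by
  intro s hs hdvd
  rw [den_inv_pow p k hp] at hdvd
  exact (Nat.prime_dvd_prime_iff_eq hs hp).mp (hs.dvd_of_dvd_pow hdvd)

lemma primeN_ne {m n : ℕ} (h : m ≠ n) : primeN m ≠ primeN n := fun hc => h (primeN_inj hc)

/-! ### generators satisfy the conditions -/

lemma gen_subset_cond (T : Set (List ℕ)) (hT : IsTree T) :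
    hjorthGenSet T ⊆ (condGroup T : Set (List ℕ →₀ ℚ)) := by
  classical
  rintro f (⟨σ, hσ, k, rfl⟩ | ⟨σ, hσ, hσne, k, rfl⟩)
  · -- first family
    set c : ℚ := ((primeN (2 * σ.length) : ℚ) ^ k)⁻¹ with hc
    have hfs : ((primeN (2 * σ.length) : ℚ) ^ k)⁻¹ • Finsupp.single σ (1:ℚ)
        = Finsupp.single σ c := by rw [Finsupp.smul_single', mul_one]
    rw [hfs]
    have hcden : ∀ s, s.Prime → s ∣ c.den → s = primeN (2 * σ.length) :=
      den_primes_inv_pow _ k (primeN_prime _)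
    refine ⟨fun τ hτ => ?_, fun τ hτ p hp hA hB hC => ?_, fun τ hτ => ?_⟩
    · rw [Finsupp.single_apply, if_neg (show ¬ σ = τ by rintro rfl; exact hτ hσ)]
    · rw [Finsupp.single_apply]
      by_cases h : σ = τ
      · rw [if_pos h]
        exact pInt_of_den_primes hp hcden (h ▸ hA)
      · rw [if_neg h]; exact pInt_zero hp
    · rw [finsum_single_children, Finsupp.single_apply]
      by_cases h1 : σ = τ
      · have h2 : ¬ (σ ≠ [] ∧ σ.dropLast = τ) := by
          rintro ⟨hne, hd⟩
          rw [h1] at hd hne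
          have hlen := congrArg List.length hd
          rw [List.length_dropLast] at hlen
          have : τ.length ≠ 0 := fun h => hne (List.length_eq_zero_iff.mp h)
          omega
        rw [if_pos h1, if_neg h2, add_zero]
        exact pInt_of_den_primes (primeN_prime _) hcden
          (primeN_ne (by subst h1; omega))
      · rw [if_neg h1, zero_add]
        by_cases h2 : σ ≠ [] ∧ σ.dropLast = τ
        · rw [if_pos h2]
          have hlen : σ.length = τ.length + 1 := by
            rw [← h2.2, List.length_dropLast]
            have : σ.length ≠ 0 := fun h => h2.1 (List.length_eq_zero_iff.mp h)
            omega
          exact pInt_of_den_primes (primeN_prime _) hcden (primeN_ne (by omega))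
        · rw [if_neg h2]; exact pInt_zero (primeN_prime _)
  · -- second family
    set c : ℚ := ((primeN (2 * σ.length - 1) : ℚ) ^ k)⁻¹ with hc
    have hσlen : σ.length ≠ 0 := fun h => hσne (List.length_eq_zero_iff.mp h)
    have hfs : ((primeN (2 * σ.length - 1) : ℚ) ^ k)⁻¹ •
          (Finsupp.single σ (1:ℚ) - Finsupp.single σ.dropLast (1:ℚ))
        = Finsupp.single σ c - Finsupp.single σ.dropLast c := by
      rw [smul_sub, Finsupp.smul_single', Finsupp.smul_single', mul_one]
    rw [hfs]
    have hcden : ∀ s, s.Prime → s ∣ c.den → s = primeN (2 * σ.length - 1) :=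
      den_primes_inv_pow _ k (primeN_prime _)
    have hdlen : σ.dropLast.length = σ.length - 1 := List.length_dropLast
    have hdT : σ.dropLast ∈ T := hT σ hσ _ (List.dropLast_prefix σ)
    refine ⟨fun τ hτ => ?_, fun τ hτ p hp hA hB hC => ?_, fun τ hτ => ?_⟩
    · rw [Finsupp.sub_apply, Finsupp.single_apply, Finsupp.single_apply,
        if_neg (show ¬ σ = τ by rintro rfl; exact hτ hσ),
        if_neg (show ¬ σ.dropLast = τ by rintro rfl; exact hτ hdT), sub_zero]
    · rw [Finsupp.sub_apply, Finsupp.single_apply, Finsupp.single_apply]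
      by_cases h1 : σ = τ
      · have h2 : ¬ σ.dropLast = τ := by
          intro hd
          rw [h1] at hd
          have hlen := congrArg List.length hd
          rw [List.length_dropLast] at hlen
          have hτ0 : τ.length ≠ 0 := by rw [← h1]; exact hσlen
          omega
        rw [if_pos h1, if_neg h2, sub_zero]
        refine pInt_of_den_primes hp hcden ?_
        have := hC (h1 ▸ hσne)
        rwa [h1]
      · rw [if_neg h1, zero_sub]
        by_cases h2 : σ.dropLast = τ
        · rw [if_pos h2]
          apply pInt_neg
          refine pInt_of_den_primes hp hcden ?_
          have hlen2 := congrArg List.length h2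
          rw [List.length_dropLast] at hlen2
          have hτσ : 2 * τ.length + 1 = 2 * σ.length - 1 := by omega
          rw [← hτσ]
          exact hB
        · rw [if_neg h2, neg_zero]; exact pInt_zero hp
    · rw [finsum_children_sub, finsum_single_children, finsum_single_children,
        Finsupp.sub_apply, Finsupp.single_apply, Finsupp.single_apply]
      have hS1 : (if σ ≠ [] ∧ σ.dropLast = τ then c else 0)
          = (if σ.dropLast = τ then c else 0) := by
        by_cases h : σ.dropLast = τ
        · rw [if_pos ⟨hσne, h⟩, if_pos h]
        · rw [if_neg (fun hc' => h hc'.2), if_neg h]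
      rw [hS1]
      have harr : (if σ = τ then c else 0) - (if σ.dropLast = τ then c else 0) +
            ((if σ.dropLast = τ then c else 0) -
              (if σ.dropLast ≠ [] ∧ σ.dropLast.dropLast = τ then c else 0)) =
          (if σ = τ then c else 0) -
            (if σ.dropLast ≠ [] ∧ σ.dropLast.dropLast = τ then c else 0) := by ring
      rw [harr]
      by_cases h1 : σ = τ
      · have h2 : ¬ (σ.dropLast ≠ [] ∧ σ.dropLast.dropLast = τ) := by
          rintro ⟨hne, hd⟩
          have := congrArg List.length hd
          rw [List.length_dropLast, List.length_dropLast, ← h1] at this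
          have hd2 : σ.dropLast.length ≠ 0 := fun h => hne (List.length_eq_zero_iff.mp h)
          omega
        rw [if_pos h1, if_neg h2, sub_zero]
        exact pInt_of_den_primes (primeN_prime _) hcden (primeN_ne (by subst h1; omega))
      · rw [if_neg h1, zero_sub]
        by_cases h2 : σ.dropLast ≠ [] ∧ σ.dropLast.dropLast = τ
        · rw [if_pos h2]
          apply pInt_neg
          have hd2 : σ.length - 1 ≠ 0 := by
            rw [← hdlen]
            exact fun h => h2.1 (List.length_eq_zero_iff.mp h)
          have hτlen : τ.length = σ.length - 2 := by
            have h4 := congrArg List.length h2.2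
            rw [List.length_dropLast, List.length_dropLast] at h4
            omega
          exact pInt_of_den_primes (primeN_prime _) hcden (primeN_ne (by omega))
        · rw [if_neg h2, neg_zero]; exact pInt_zero (primeN_prime _)

/-! ### single elements in the group -/

lemma den_eq_pow_of_primes {n p : ℕ} (hn : n ≠ 0) (h : ∀ s, s.Prime → s ∣ n → s = p) :
    ∃ k, n = p ^ k :=
  ⟨_, Nat.eq_prime_pow_of_unique_prime_dvd hn (fun hd1 hd2 => h _ hd1 hd2)⟩

lemma single_mem_hjorth {T : Set (List ℕ)} {σ : List ℕ} (hσ : σ ∈ T) {q : ℚ}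
    (hden : ∀ s, s.Prime → s ∣ q.den → s = primeN (2 * σ.length)) :
    Finsupp.single σ q ∈ hjorthGroup T := by
  obtain ⟨k, hk⟩ := den_eq_pow_of_primes q.den_nz hden
  have hq : (q.num : ℚ) * ((primeN (2 * σ.length) : ℚ) ^ k)⁻¹ = q := by
    rw [← div_eq_mul_inv, ← Nat.cast_pow, ← hk, Rat.num_div_den]
  have key : Finsupp.single σ q =
      q.num • ((primeN (2 * σ.length) : ℚ) ^ k)⁻¹ • Finsupp.single σ (1 : ℚ) := by
    ext τ
    rw [Finsupp.smul_apply, Finsupp.smul_apply, zsmul_eq_mul, smul_eq_mul, ← mul_assoc, hq]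
    simp [Finsupp.single_apply, mul_ite]
  rw [key]
  refine AddSubgroup.zsmul_mem _ (AddSubgroup.subset_closure ?_) q.num
  exact Set.mem_union_left _ ⟨σ, hσ, k, rfl⟩

lemma single_sub_mem_hjorth {T : Set (List ℕ)} {σ : List ℕ} (hσ : σ ∈ T) (hσne : σ ≠ [])
    {q : ℚ} (hden : ∀ s, s.Prime → s ∣ q.den → s = primeN (2 * σ.length - 1)) :
    Finsupp.single σ q - Finsupp.single σ.dropLast q ∈ hjorthGroup T := by
  obtain ⟨k, hk⟩ := den_eq_pow_of_primes q.den_nz hden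
  have hq : (q.num : ℚ) * ((primeN (2 * σ.length - 1) : ℚ) ^ k)⁻¹ = q := by
    rw [← div_eq_mul_inv, ← Nat.cast_pow, ← hk, Rat.num_div_den]
  have key : Finsupp.single σ q - Finsupp.single σ.dropLast q =
      q.num • ((primeN (2 * σ.length - 1) : ℚ) ^ k)⁻¹ •
        (Finsupp.single σ (1 : ℚ) - Finsupp.single σ.dropLast (1 : ℚ)) := by
    ext τ
    rw [Finsupp.smul_apply, Finsupp.smul_apply, zsmul_eq_mul, smul_eq_mul, ← mul_assoc, hq]
    simp [Finsupp.sub_apply, Finsupp.single_apply, mul_sub, mul_ite]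
  rw [key]
  refine AddSubgroup.zsmul_mem _ (AddSubgroup.subset_closure ?_) q.num
  exact Set.mem_union_right _ ⟨σ, hσ, hσne, k, rfl⟩

/-! ### partial fractions -/

lemma split_prime (p : ℕ) (hp : p.Prime) (q : ℚ) :
    ∃ u w : ℚ, q = u + w ∧ ¬ p ∣ u.den ∧ ∀ s, s.Prime → s ∣ w.den → s = p := by
  classical
  set i := q.den.factorization p with hi
  set m := q.den / p ^ i with hm
  have hden0 : q.den ≠ 0 := q.den_nz
  have hfact : p ^ i * m = q.den := Nat.ordProj_mul_ordCompl_eq_self q.den p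
  have hpm : ¬ p ∣ m := Nat.not_dvd_ordCompl hp hden0
  have hm0 : m ≠ 0 := by
    intro h; rw [h, mul_zero] at hfact; exact hden0 hfact.symm
  have hnc : Nat.Coprime (p ^ i) m :=
    Nat.Coprime.pow_left i ((Nat.Prime.coprime_iff_not_dvd hp).mpr hpm)
  have hcop : IsCoprime ((p ^ i : ℕ) : ℤ) ((m : ℕ) : ℤ) := by
    rw [Int.isCoprime_iff_gcd_eq_one, Int.gcd_natCast_natCast]
    exact hnc
  obtain ⟨x, y, hxy⟩ := hcop
  refine ⟨((q.num * x : ℤ) : ℚ) / (((m : ℕ) : ℤ) : ℚ),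
    ((q.num * y : ℤ) : ℚ) / (((p ^ i : ℕ) : ℤ) : ℚ), ?_, ?_, ?_⟩
  · have hmQ : (((m : ℕ) : ℤ) : ℚ) ≠ 0 := by exact_mod_cast hm0
    have hpQ : (((p ^ i : ℕ) : ℤ) : ℚ) ≠ 0 := by
      exact_mod_cast pow_ne_zero i hp.pos.ne'
    have hqpm : q * ((((p ^ i : ℕ) : ℤ) : ℚ) * (((m : ℕ) : ℤ) : ℚ)) = (q.num : ℚ) := by
      have hden : ((q.den : ℕ) : ℚ) = (((p ^ i : ℕ) : ℤ) : ℚ) * (((m : ℕ) : ℤ) : ℚ) := by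
        rw [← hfact]; push_cast; ring
      rw [← hden]
      exact_mod_cast Rat.mul_den_eq_num q
    have hxyQ : (x : ℚ) * ((p : ℚ)) ^ i + (y : ℚ) * (m : ℚ) = 1 := by
      have h6 := congrArg (fun z : ℤ => (z : ℚ)) hxy
      push_cast at h6
      linarith [h6]
    rw [div_add_div _ _ hmQ hpQ, eq_div_iff (mul_ne_zero hmQ hpQ)]
    push_cast at hqpm ⊢
    linear_combination hqpm - (q.num : ℚ) * hxyQ
  · intro hdvd
    have h1 : ((((q.num * x : ℤ) : ℚ) / (((m : ℕ) : ℤ) : ℚ)).den : ℤ) ∣ ((m : ℕ) : ℤ) := by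
      rw [← Rat.divInt_eq_div]
      exact Rat.den_dvd _ _
    have h2 : (((q.num * x : ℤ) : ℚ) / (((m : ℕ) : ℤ) : ℚ)).den ∣ m := by
      exact_mod_cast h1
    exact hpm (hdvd.trans h2)
  · intro s hs hdvd
    have h1 : ((((q.num * y : ℤ) : ℚ) / (((p ^ i : ℕ) : ℤ) : ℚ)).den : ℤ) ∣ ((p ^ i : ℕ) : ℤ) := by
      rw [← Rat.divInt_eq_div]
      exact Rat.den_dvd _ _
    have h2 : (((q.num * y : ℤ) : ℚ) / (((p ^ i : ℕ) : ℤ) : ℚ)).den ∣ p ^ i := by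
      exact_mod_cast h1
    exact (Nat.prime_dvd_prime_iff_eq hs hp).mp (hs.dvd_of_dvd_pow (hdvd.trans h2))

/-! ### the decomposition step at a single node -/

lemma hstep {T : Set (List ℕ)} {σ : List ℕ} (hσ : σ ∈ T) (q : ℚ)
    (h2 : ∀ s, s.Prime → s ∣ q.den →
      s = primeN (2 * σ.length) ∨ s = primeN (2 * σ.length - 1)) :
    ∃ u w : ℚ, q = u + w ∧
      Finsupp.single σ u ∈ hjorthGroup T ∧
      (Finsupp.single σ w - Finsupp.single σ.dropLast w) ∈ hjorthGroup T ∧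
      (∀ s, s.Prime → s ∣ u.den → s = primeN (2 * σ.length)) ∧
      (∀ s, s.Prime → s ∣ w.den → s = primeN (2 * σ.length - 1)) ∧
      (σ = [] → w = 0) := by
  by_cases hσe : σ = []
  · have hqden : ∀ s, s.Prime → s ∣ q.den → s = primeN (2 * σ.length) := by
      intro s hs hdvd
      rcases h2 s hs hdvd with h | h
      · exact h
      · rw [h]; subst hσe; norm_num
    refine ⟨q, 0, (add_zero q).symm, ?_, ?_, hqden, ?_, fun _ => rfl⟩
    · exact single_mem_hjorth hσ hqden
    · simp only [Finsupp.single_zero, sub_zero, sub_self]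
      exact zero_mem _
    · intro s hs hdvd
      simp at hdvd
      subst hdvd
      exact absurd hs (by norm_num)
  · obtain ⟨u, w, hsum, hu, hw⟩ := split_prime (primeN (2 * σ.length - 1)) (primeN_prime _) q
    have hσlen : σ.length ≠ 0 := fun h => hσe (List.length_eq_zero_iff.mp h)
    have huden : ∀ s, s.Prime → s ∣ u.den → s = primeN (2 * σ.length) := by
      intro s hs hdvd
      have hu2 : u = q - w := by rw [hsum]; ring
      have hdvd2 : s ∣ q.den * w.den := by
        apply dvd_trans _ (by
          rw [hu2, sub_eq_add_neg]
          exact dvd_trans (Rat.add_den_dvd q (-w)) (by rw [Rat.den_neg_eq_den]) :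
            u.den ∣ q.den * w.den)
        exact hdvd
      rcases (Nat.Prime.dvd_mul hs).mp hdvd2 with h | h
      · rcases h2 s hs h with h' | h'
        · exact h'
        · exact absurd (h' ▸ hdvd) hu
      · exact absurd (hw s hs h ▸ hdvd) hu
    exact ⟨u, w, hsum, single_mem_hjorth hσ huden,
      single_sub_mem_hjorth hσ hσe hw, huden, hw, fun h => absurd h hσe⟩

/-! ### the main induction -/

lemma main_induction (T : Set (List ℕ)) (hT : IsTree T) :
    ∀ N : ℕ, ∀ g : List ℕ →₀ ℚ,
      (∀ σ : List ℕ, σ ∉ T → g σ = 0) →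
      (∀ σ ∈ T, ∀ p : ℕ, p.Prime → p ≠ primeN (2 * σ.length) →
          p ≠ primeN (2 * σ.length + 1) →
          (σ ≠ [] → p ≠ primeN (2 * σ.length - 1)) → PIntegral p (g σ)) →
      (∀ σ ∈ T, PIntegral (primeN (2 * σ.length + 1)) (g σ + ∑ᶠ b : ℕ, g (σ ++ [b]))) →
      (∀ σ ∈ g.support, σ.length < N) → g ∈ hjorthGroup T := by
  intro N
  induction N with
  | zero =>
    intro g _ _ _ hb
    have hg0 : g = 0 := by
      ext τ
      by_contra hc
      exact absurd (hb τ (Finsupp.mem_support_iff.mpr hc)) (by omega)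
    rw [hg0]; exact zero_mem _
  | succ N ih =>
    intro g hg1 hg2 hg3 hb
    classical
    set F : Finset (List ℕ) := g.support.filter (fun σ => σ.length = N) with hF
    have hFsupp : ∀ σ ∈ F, g σ ≠ 0 ∧ σ.length = N := by
      intro σ hσ
      rw [hF, Finset.mem_filter, Finsupp.mem_support_iff] at hσ
      exact hσ
    have hFT : ∀ σ ∈ F, σ ∈ T := fun σ hσ => by
      by_contra hc; exact (hFsupp σ hσ).1 (hg1 σ hc)
    have hchild0 : ∀ σ ∈ F, ∀ b : ℕ, g (σ ++ [b]) = 0 := by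
      intro σ hσ b
      by_contra hc
      have h5 := hb _ (Finsupp.mem_support_iff.mpr hc)
      have hlen : (σ ++ [b]).length = N + 1 := by simp [(hFsupp σ hσ).2]
      omega
    have hden : ∀ σ ∈ F, ∀ s, s.Prime → s ∣ (g σ).den →
        s = primeN (2 * σ.length) ∨ s = primeN (2 * σ.length - 1) := by
      intro σ hσ s hs hdvd
      have hint : PIntegral (primeN (2 * σ.length + 1)) (g σ) := by
        have h3 := hg3 σ (hFT σ hσ)
        rwa [finsum_eq_zero_of_forall_eq_zero (fun b => hchild0 σ hσ b), add_zero] at h3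
      have hsne : s ≠ primeN (2 * σ.length + 1) := fun h => hint (h ▸ hdvd)
      by_cases hA : s = primeN (2 * σ.length)
      · exact Or.inl hA
      by_cases hC : s = primeN (2 * σ.length - 1)
      · exact Or.inr hC
      · exact absurd hdvd (hg2 σ (hFT σ hσ) s hs hA hsne (fun _ => hC))
    -- choose decompositions at the top level
    have hex : ∀ σ : List ℕ, ∃ u w : ℚ, σ ∈ F →
        (g σ = u + w ∧ Finsupp.single σ u ∈ hjorthGroup T ∧
          (Finsupp.single σ w - Finsupp.single σ.dropLast w) ∈ hjorthGroup T ∧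
          (∀ s, s.Prime → s ∣ u.den → s = primeN (2 * σ.length)) ∧
          (∀ s, s.Prime → s ∣ w.den → s = primeN (2 * σ.length - 1)) ∧
          (σ = [] → w = 0)) := by
      intro σ
      by_cases hσ : σ ∈ F
      · obtain ⟨u, w, h⟩ := hstep (hFT σ hσ) (g σ) (hden σ hσ)
        exact ⟨u, w, fun _ => h⟩
      · exact ⟨0, 0, fun h => absurd h hσ⟩
    choose u w hu using hex
    set h : List ℕ →₀ ℚ := ∑ σ ∈ F,
      (Finsupp.single σ (u σ) + (Finsupp.single σ (w σ) - Finsupp.single σ.dropLast (w σ)))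
      with hh
    have hmemh : h ∈ hjorthGroup T :=
      AddSubgroup.sum_mem _ (fun σ hσ => add_mem ((hu σ hσ).2.1) ((hu σ hσ).2.2.1))
    set W : List ℕ → ℚ := fun τ => ∑ σ ∈ F, (if σ.dropLast = τ then w σ else 0) with hW
    have happ : ∀ τ, h τ = (if τ ∈ F then u τ + w τ else 0) - W τ := by
      intro τ
      rw [hh, Finsupp.finset_sum_apply]
      have hterm : ∀ σ ∈ F,
          (Finsupp.single σ (u σ) +
            (Finsupp.single σ (w σ) - Finsupp.single σ.dropLast (w σ))) τ
          = (if σ = τ then u σ + w σ else 0) - (if σ.dropLast = τ then w σ else 0) := by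
        intro σ _
        rw [Finsupp.add_apply, Finsupp.sub_apply, Finsupp.single_apply,
          Finsupp.single_apply, Finsupp.single_apply]
        by_cases h1 : σ = τ <;> by_cases h2 : σ.dropLast = τ <;> simp [h1, h2] <;> ring
      rw [Finset.sum_congr rfl hterm, Finset.sum_sub_distrib,
        Finset.sum_ite_eq' F τ (fun σ => u σ + w σ)]
    have hg'app : ∀ τ, (g - h) τ = g τ - (if τ ∈ F then u τ + w τ else 0) + W τ := by
      intro τ
      rw [Finsupp.sub_apply, happ]
      ring
    -- basic facts about w
    have hwne : ∀ σ ∈ F, w σ ≠ 0 → σ ≠ [] :=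
      fun σ hσ hw0 hnil => hw0 ((hu σ hσ).2.2.2.2.2 hnil)
    have hlenW : ∀ τ σ, σ ∈ F → σ.dropLast = τ → w σ ≠ 0 → τ.length + 1 = N := by
      intro τ σ hσ hd hw0
      have hσne : σ ≠ [] := hwne σ hσ hw0
      have h5 := congrArg List.length hd
      rw [List.length_dropLast] at h5
      have h6 : σ.length ≠ 0 := fun hc => hσne (List.length_eq_zero_iff.mp hc)
      have h7 := (hFsupp σ hσ).2
      omega
    have hW0 : ∀ τ, τ.length + 1 ≠ N → W τ = 0 := by
      intro τ hτ
      apply Finset.sum_eq_zero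
      intro σ hσ
      by_cases hd : σ.dropLast = τ
      · rw [if_pos hd]
        by_contra hw0
        exact hτ (hlenW τ σ hσ hd hw0)
      · rw [if_neg hd]
    have hWint : ∀ τ, ∀ p : ℕ, p.Prime → p ≠ primeN (2 * τ.length + 1) →
        PIntegral p (W τ) := by
      intro τ p hp hne
      apply pInt_sum hp
      intro σ hσ
      by_cases hd : σ.dropLast = τ
      · rw [if_pos hd]
        by_cases hw0 : w σ = 0
        · rw [hw0]; exact pInt_zero hp
        · have hσne : σ ≠ [] := hwne σ hσ hw0
          have hlen : σ.length = τ.length + 1 := by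
            have h5 := congrArg List.length hd
            rw [List.length_dropLast] at h5
            have h6 : σ.length ≠ 0 := fun hc => hσne (List.length_eq_zero_iff.mp hc)
            omega
          refine pInt_of_den_primes hp ((hu σ hσ).2.2.2.2.1) ?_
          rw [hlen, show 2 * (τ.length + 1) - 1 = 2 * τ.length + 1 by omega]
          exact hne
      · rw [if_neg hd]; exact pInt_zero hp
    -- evaluation of g - h
    have E1 : ∀ τ : List ℕ, τ.length = N → (g - h) τ = 0 := by
      intro τ hτ
      rw [hg'app, hW0 τ (by omega), add_zero]
      by_cases hτF : τ ∈ F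
      · rw [if_pos hτF, (hu τ hτF).1]; ring
      · rw [if_neg hτF, sub_zero]
        have : τ ∉ g.support := fun hc => hτF (by rw [hF, Finset.mem_filter]; exact ⟨hc, hτ⟩)
        exact Finsupp.notMem_support_iff.mp this
    have E2 : ∀ τ : List ℕ, τ.length ≠ N → (g - h) τ = g τ + W τ := by
      intro τ hτ
      rw [hg'app, if_neg (fun hc => hτ (hFsupp τ hc).2), sub_zero]
    have hgout : ∀ τ : List ℕ, ¬ τ.length < N + 1 → g τ = 0 := by
      intro τ hτ
      by_contra hc
      exact hτ (hb τ (Finsupp.mem_support_iff.mpr hc))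
    have suppg' : ∀ τ ∈ (g - h).support, τ.length < N := by
      intro τ hτ
      rw [Finsupp.mem_support_iff] at hτ
      by_contra hc
      push_neg at hc
      rcases Nat.eq_or_lt_of_le hc with heq | hlt
      · exact hτ (E1 τ heq.symm)
      · apply hτ
        rw [E2 τ (by omega), hgout τ (by omega), hW0 τ (by omega), add_zero]
    -- the conditions for g - h
    have cond1 : ∀ τ : List ℕ, τ ∉ T → (g - h) τ = 0 := by
      intro τ hτ
      by_cases hτN : τ.length = N
      · exact E1 τ hτN
      · rw [E2 τ hτN, hg1 τ hτ, zero_add]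
        apply Finset.sum_eq_zero
        intro σ hσ
        by_cases hd : σ.dropLast = τ
        · rw [if_pos hd]
          by_contra hw0
          exact hτ (hd ▸ hT σ (hFT σ hσ) σ.dropLast (List.dropLast_prefix σ))
        · rw [if_neg hd]
    have cond2 : ∀ τ ∈ T, ∀ p : ℕ, p.Prime → p ≠ primeN (2 * τ.length) →
        p ≠ primeN (2 * τ.length + 1) →
        (τ ≠ [] → p ≠ primeN (2 * τ.length - 1)) → PIntegral p ((g - h) τ) := by
      intro τ hτ p hp hA hB hC
      by_cases hτN : τ.length = N
      · rw [E1 τ hτN]; exact pInt_zero hp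
      · rw [E2 τ hτN]
        exact pInt_add hp (hg2 τ hτ p hp hA hB hC) (hWint τ p hp hB)
    have cond3 : ∀ τ ∈ T, PIntegral (primeN (2 * τ.length + 1))
        ((g - h) τ + ∑ᶠ b : ℕ, (g - h) (τ ++ [b])) := by
      intro τ hτ
      by_cases hτN : τ.length = N
      · -- top level: everything vanishes
        have hz : ∀ b : ℕ, (g - h) (τ ++ [b]) = 0 := by
          intro b
          rw [E2 (τ ++ [b]) (by simp; omega), hgout (τ ++ [b]) (by simp; omega),
            hW0 (τ ++ [b]) (by simp; omega), add_zero]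
        rw [E1 τ hτN, finsum_eq_zero_of_forall_eq_zero hz, add_zero]
        exact pInt_zero (primeN_prime _)
      by_cases hτN1 : τ.length + 1 = N
      · -- parents of the top level
        have hz : ∀ b : ℕ, (g - h) (τ ++ [b]) = 0 := by
          intro b; exact E1 (τ ++ [b]) (by simp; omega)
        rw [finsum_eq_zero_of_forall_eq_zero hz, add_zero, E2 τ hτN]
        set Fτ : Finset (List ℕ) := F.filter (fun σ => σ.dropLast = τ) with hFτ
        have hWτ : W τ = ∑ σ ∈ Fτ, w σ := (Finset.sum_filter _ _).symm
        have himg : ∑ σ ∈ (Finset.range (childBound g)).image (fun b => τ ++ [b]), g σ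
            = ∑ b ∈ Finset.range (childBound g), g (τ ++ [b]) :=
          Finset.sum_image (by
            intro a _ b _ hab
            simpa using List.append_cancel_left hab)
        have hsub : Fτ ⊆ (Finset.range (childBound g)).image (fun b => τ ++ [b]) := by
          intro σ hσ
          rw [hFτ, Finset.mem_filter] at hσ
          obtain ⟨hσF, hd⟩ := hσ
          have hg0 : g σ ≠ 0 := (hFsupp σ hσF).1
          have hσne : σ ≠ [] := by
            intro hnil
            have h5 := (hFsupp σ hσF).2
            rw [hnil] at h5 hd
            simp only [List.dropLast_nil] at hd
            simp only [List.length_nil] at h5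
            rw [← hd] at hτN1
            simp only [List.length_nil] at hτN1
            omega
          have hσeq : σ = τ ++ [σ.getLast hσne] := by
            have h3 := List.dropLast_append_getLast hσne
            rw [hd] at h3
            exact h3.symm
          have hg0' : g (τ ++ [σ.getLast hσne]) ≠ 0 := by rw [← hσeq]; exact hg0
          exact Finset.mem_image.mpr ⟨σ.getLast hσne,
            Finset.mem_range.mpr (lt_childBound hg0'), hσeq.symm⟩
        have hvan : ∀ σ ∈ (Finset.range (childBound g)).image (fun b => τ ++ [b]),
            σ ∉ Fτ → g σ = 0 := by
          intro σ hσimg hσn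
          by_contra hc
          obtain ⟨b, _, rfl⟩ := Finset.mem_image.mp hσimg
          apply hσn
          rw [hFτ, Finset.mem_filter]
          refine ⟨?_, List.dropLast_concat ..⟩
          rw [hF, Finset.mem_filter]
          exact ⟨Finsupp.mem_support_iff.mpr hc, by simp; omega⟩
        have hfs : ∑ᶠ b, g (τ ++ [b]) = ∑ σ ∈ Fτ, g σ := by
          rw [finsum_children τ (le_refl (childBound g)), ← himg,
            Finset.sum_subset hsub hvan]
        have hdecomp : g τ + W τ = (g τ + ∑ᶠ b, g (τ ++ [b])) - ∑ σ ∈ Fτ, u σ := by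
          rw [hfs, hWτ]
          have hsplit : ∑ σ ∈ Fτ, g σ = ∑ σ ∈ Fτ, (u σ + w σ) :=
            Finset.sum_congr rfl (fun σ hσ => (hu σ (Finset.mem_filter.mp hσ).1).1)
          rw [hsplit, Finset.sum_add_distrib]
          ring
        rw [hdecomp]
        refine pInt_sub (primeN_prime _) (hg3 τ hτ) ?_
        apply pInt_sum (primeN_prime _)
        intro σ hσ
        have hσF := (Finset.mem_filter.mp hσ).1
        refine pInt_of_den_primes (primeN_prime _) ((hu σ hσF).2.2.2.1) ?_
        apply primeN_ne
        have h5 := (hFsupp σ hσF).2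
        omega
      · -- low levels
        set M := max (childBound g) (childBound (g - h)) with hM
        have hgc : ∑ᶠ b, g (τ ++ [b]) = ∑ b ∈ Finset.range M, g (τ ++ [b]) :=
          finsum_children τ (le_max_left _ _)
        have hg'c : ∑ᶠ b, (g - h) (τ ++ [b]) = ∑ b ∈ Finset.range M, (g - h) (τ ++ [b]) :=
          finsum_children τ (le_max_right _ _)
        have hkey : (g - h) τ + ∑ᶠ b, (g - h) (τ ++ [b]) =
            (g τ + ∑ᶠ b, g (τ ++ [b])) + ∑ b ∈ Finset.range M, W (τ ++ [b]) := by
          rw [hg'c, hgc, E2 τ hτN, hW0 τ hτN1, add_zero]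
          have hch : ∀ b ∈ Finset.range M, (g - h) (τ ++ [b]) =
              g (τ ++ [b]) + W (τ ++ [b]) := by
            intro b _
            exact E2 (τ ++ [b]) (by simp; omega)
          rw [Finset.sum_congr rfl hch, Finset.sum_add_distrib]
          ring
        rw [hkey]
        refine pInt_add (primeN_prime _) (hg3 τ hτ) ?_
        apply pInt_sum (primeN_prime _)
        intro b _
        apply hWint (τ ++ [b]) _ (primeN_prime _)
        apply primeN_ne
        simp only [List.length_append, List.length_cons, List.length_nil]
        omega
    -- conclude
    have hg'mem : g - h ∈ hjorthGroup T := ih (g - h) cond1 cond2 cond3 suppg'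
    have : g = (g - h) + h := by abel
    rw [this]
    exact add_mem hg'mem hmemh

/-- For a tree `T ⊆ ℕ^{<ℕ}`, an element `g ∈ ℚ^(ℕ^{<ℕ})` belongs to
`G(T)` if and only if: (1) `g_σ = 0` for `σ ∉ T`; (2) for `σ ∈ T` and every prime `p`
different from `p_{2|σ|}`, `p_{2|σ|+1}` and (when `|σ| ≥ 1`) `p_{2|σ|−1}`, the number
`g_σ` is `p`-integral; (3) for every `σ ∈ T`, `g_σ + Σ_b g_{σb}` is `p_{2|σ|+1}`-integral. -/
theorem mem_hjorthGroup_iff (T : Set (List ℕ)) (hT : IsTree T) (g : List ℕ →₀ ℚ) :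
    g ∈ hjorthGroup T ↔
      ((∀ σ : List ℕ, σ ∉ T → g σ = 0) ∧
       (∀ σ ∈ T, ∀ p : ℕ, p.Prime → p ≠ primeN (2 * σ.length) →
          p ≠ primeN (2 * σ.length + 1) →
          (σ ≠ [] → p ≠ primeN (2 * σ.length - 1)) →
          PIntegral p (g σ)) ∧
       (∀ σ ∈ T, PIntegral (primeN (2 * σ.length + 1))
          (g σ + ∑ᶠ b : ℕ, g (σ ++ [b])))) := by
  constructor
  · intro hmem
    exact (AddSubgroup.closure_le (condGroup T)).2 (gen_subset_cond T hT) hmem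
  · rintro ⟨h1, h2, h3⟩
    apply main_induction T hT (g.support.sup List.length + 1) g h1 h2 h3
    intro σ hσ
    exact Nat.lt_succ_of_le (Finset.le_sup hσ)
end

section
/- Let α, β, γ ∈ 𝕋 be rationally independent, let Λ ≤ 𝕋³ be the subgroup generated by (α,1,α), (1,α,β), (1,1,γ), and let K₁ := 𝕋 × {1} × 𝕋 and K₂ := {1} × 𝕋 × 𝕋. Then Λ is dense in 𝕋³, Λ ∩ K₁ equals the subgroup generated by (α,1,α) and (1,1,γ) and is dense in K₁, and Λ ∩ K₂ is dense in K₂. -/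
open Subgroup

/-! ### Auxiliary lemmas -/

lemma circle_exp_surjective : Function.Surjective Circle.exp :=
  fun z => ⟨Complex.arg z, Circle.exp_arg z⟩

lemma circle_exp_zsmul (m : ℤ) (x : ℝ) : Circle.exp (m • x) = Circle.exp x ^ m := by
  have h := map_zsmul Circle.expHom m x
  simpa [Circle.expHom, ← ofMul_zpow] using h

/-- An element of infinite order generates a dense subgroup of the circle. -/
lemma dense_zpowers_circle (u : Circle) (hu : ∀ m : ℤ, u ^ m = 1 → m = 0) :
    Dense ((Subgroup.zpowers u : Subgroup Circle) : Set Circle) := by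
  set S : AddSubgroup ℝ :=
    (Subgroup.toAddSubgroup (Subgroup.zpowers u)).comap Circle.expHom with hS
  have hmem : ∀ x : ℝ, x ∈ S ↔ Circle.exp x ∈ Subgroup.zpowers u := by
    intro x; rfl
  have h2π : (2 * Real.pi) ∈ S := by
    rw [hmem]
    exact ⟨0, by simp⟩
  have hθ : Complex.arg u ∈ S := by
    rw [hmem, Circle.exp_arg]
    exact ⟨1, by simp⟩
  rcases AddSubgroup.dense_or_cyclic S with hd | ⟨a, ha⟩
  · have himg : Circle.exp '' (S : Set ℝ) ⊆
        ((Subgroup.zpowers u : Subgroup Circle) : Set Circle) := by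
      rintro _ ⟨x, hx, rfl⟩
      exact (hmem x).mp hx
    have hdr : DenseRange Circle.exp := circle_exp_surjective.denseRange
    exact (hdr.dense_image Circle.exp.continuous hd).mono himg
  · exfalso
    rw [ha] at h2π hθ
    rw [AddSubgroup.mem_closure_singleton] at h2π hθ
    obtain ⟨m, hm⟩ := h2π
    obtain ⟨k, hk⟩ := hθ
    have hm0 : m ≠ 0 := by
      rintro rfl
      simp at hm
    apply hm0
    apply hu m
    have h1 : u ^ m = Circle.exp (m • Complex.arg u) := by
      rw [circle_exp_zsmul, Circle.exp_arg]
    rw [h1, ← hk, smul_comm m k a, hm, zsmul_eq_mul]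
    exact Circle.exp_int_mul_two_pi k

abbrev G3 := Circle × Circle × Circle

lemma dense_pow_mem {G : Type*} [Group G] [TopologicalSpace G] [IsTopologicalGroup G]
    (u : Circle) (hu : Dense ((Subgroup.zpowers u : Subgroup Circle) : Set Circle))
    (f : Circle →* G) (hf : Continuous f) (T : Subgroup G) (hT : IsClosed (T : Set G))
    (hfu : f u ∈ T) (t : Circle) : f t ∈ T := by
  have hsub : ((Subgroup.zpowers u : Subgroup Circle) : Set Circle) ⊆ f ⁻¹' T := by
    rintro x ⟨n, rfl⟩
    simpa [map_zpow] using T.zpow_mem hfu n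
  have h := closure_minimal hsub (hT.preimage hf)
  have ht : t ∈ _root_.closure ((Subgroup.zpowers u : Subgroup Circle) : Set Circle) := by
    rw [hu.closure_eq]; trivial
  exact h ht

noncomputable def e1 : Circle →* G3 where
  toFun t := (t, 1, 1)
  map_one' := rfl
  map_mul' x y := by simp [Prod.ext_iff]

noncomputable def e2 : Circle →* G3 where
  toFun t := (1, t, 1)
  map_one' := rfl
  map_mul' x y := by simp [Prod.ext_iff]

noncomputable def e3 : Circle →* G3 where
  toFun t := (1, 1, t)
  map_one' := rfl
  map_mul' x y := by simp [Prod.ext_iff]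

lemma e1_cont : Continuous e1 :=
  continuous_id.prodMk (continuous_const.prodMk continuous_const)
lemma e2_cont : Continuous e2 :=
  continuous_const.prodMk (continuous_id.prodMk continuous_const)
lemma e3_cont : Continuous e3 :=
  continuous_const.prodMk (continuous_const.prodMk continuous_id)

/-- Projection onto the middle coordinate. -/
noncomputable def π2 : G3 →* Circle :=
  (MonoidHom.fst Circle Circle).comp (MonoidHom.snd Circle (Circle × Circle))

lemma rep_mem_closure_triple {G : Type*} [CommGroup G] (x y z : G) (q : G)
    (hq : q ∈ Subgroup.closure {x, y, z}) :
    ∃ a b c : ℤ, q = x ^ a * y ^ b * z ^ c := by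
  induction hq using Subgroup.closure_induction with
  | mem w hw =>
      simp only [Set.mem_insert_iff, Set.mem_singleton_iff] at hw
      rcases hw with rfl | rfl | rfl
      · exact ⟨1, 0, 0, by simp⟩
      · exact ⟨0, 1, 0, by simp⟩
      · exact ⟨0, 0, 1, by simp⟩
  | one => exact ⟨0, 0, 0, by simp⟩
  | mul p q hp hq ihp ihq =>
      obtain ⟨a, b, c, rfl⟩ := ihp
      obtain ⟨a', b', c', rfl⟩ := ihq
      exact ⟨a + a', b + b', c + c', by
        simp only [zpow_add]
        simp [mul_comm, mul_left_comm, mul_assoc]⟩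
  | inv p hp ihp =>
      obtain ⟨a, b, c, rfl⟩ := ihp
      exact ⟨-a, -b, -c, by simp [zpow_neg, mul_comm, mul_left_comm]⟩

/-- The subgroup `𝕋 × {1} × 𝕋` of `𝕋³`. -/
noncomputable def KOne : Subgroup (Circle × Circle × Circle) :=
  (⊤ : Subgroup Circle).prod ((⊥ : Subgroup Circle).prod (⊤ : Subgroup Circle))

/-- The subgroup `{1} × 𝕋 × 𝕋` of `𝕋³`. -/
noncomputable def KTwo : Subgroup (Circle × Circle × Circle) :=
  (⊥ : Subgroup Circle).prod ((⊤ : Subgroup Circle).prod (⊤ : Subgroup Circle))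

/-- Let `α, β, γ ∈ 𝕋` be rationally independent and let `Λ ≤ 𝕋³` be the
subgroup generated by `(α,1,α)`, `(1,α,β)`, `(1,1,γ)`.  Then `Λ` is dense in `𝕋³`,
`Λ ∩ K₁` equals the subgroup generated by `(α,1,α)` and `(1,1,γ)` and is dense in
`K₁ = 𝕋 × {1} × 𝕋`, and `Λ ∩ K₂` is dense in `K₂ = {1} × 𝕋 × 𝕋`. -/
theorem lambda_dense_and_intersections_dense
    (α β γ : Circle)
    (hindep : ∀ a b c : ℤ, α ^ a * β ^ b * γ ^ c = 1 → a = 0 ∧ b = 0 ∧ c = 0)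
    (Λ : Subgroup (Circle × Circle × Circle))
    (hΛ : Λ = Subgroup.closure {(α, 1, α), (1, α, β), (1, 1, γ)}) :
    Dense (Λ : Set (Circle × Circle × Circle)) ∧
    Λ ⊓ KOne = Subgroup.closure {(α, 1, α), (1, 1, γ)} ∧
    (KOne : Set (Circle × Circle × Circle)) ⊆
      _root_.closure ((Λ ⊓ KOne : Subgroup (Circle × Circle × Circle)) : Set (Circle × Circle × Circle)) ∧
    (KTwo : Set (Circle × Circle × Circle)) ⊆
      _root_.closure ((Λ ⊓ KTwo : Subgroup (Circle × Circle × Circle)) : Set (Circle × Circle × Circle)) := by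
  have hα : ∀ m : ℤ, α ^ m = 1 → m = 0 := fun m h => (hindep m 0 0 (by simpa using h)).1
  have hγ : ∀ m : ℤ, γ ^ m = 1 → m = 0 := fun m h => (hindep 0 0 m (by simpa using h)).2.2
  have dα := dense_zpowers_circle α hα
  have dγ := dense_zpowers_circle γ hγ
  set g1 : G3 := (α, 1, α) with hg1
  set g2 : G3 := (1, α, β) with hg2
  set g3 : G3 := (1, 1, γ) with hg3
  have hg1Λ : g1 ∈ Λ := by rw [hΛ]; exact Subgroup.subset_closure (by simp)
  have hg2Λ : g2 ∈ Λ := by rw [hΛ]; exact Subgroup.subset_closure (by simp)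
  have hg3Λ : g3 ∈ Λ := by rw [hΛ]; exact Subgroup.subset_closure (by simp)
  have hg1K1 : g1 ∈ KOne := by
    simp [KOne, Subgroup.mem_prod, Subgroup.mem_bot, hg1]
  have hg3K1 : g3 ∈ KOne := by
    simp [KOne, Subgroup.mem_prod, Subgroup.mem_bot, hg3]
  have hg2K2 : g2 ∈ KTwo := by
    simp [KTwo, Subgroup.mem_prod, Subgroup.mem_bot, hg2]
  have hg3K2 : g3 ∈ KTwo := by
    simp [KTwo, Subgroup.mem_prod, Subgroup.mem_bot, hg3]
  -- Part 2 : the intersection with K₁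
  have hpart2 : Λ ⊓ KOne = Subgroup.closure {g1, g3} := by
    apply le_antisymm
    · rintro p ⟨hpΛ, hpK⟩
      rw [hΛ] at hpΛ
      obtain ⟨a, b, c, rfl⟩ := rep_mem_closure_triple g1 g2 g3 p hpΛ
      have hb : π2 (g1 ^ a * g2 ^ b * g3 ^ c) = α ^ b := by
        simp [π2, hg1, hg2, hg3]
      have h1 : π2 (g1 ^ a * g2 ^ b * g3 ^ c) = 1 := by
        have h' := (Subgroup.mem_prod.mp
          ((Subgroup.mem_prod.mp (hpK : g1 ^ a * g2 ^ b * g3 ^ c ∈ KOne)).2)).1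
        exact Subgroup.mem_bot.mp h'
      have hb0 : b = 0 := hα b (by rw [← hb, h1])
      subst hb0
      have heq : g1 ^ a * g2 ^ (0 : ℤ) * g3 ^ c = g1 ^ a * g3 ^ c := by simp
      rw [heq]
      exact Subgroup.mul_mem _
        (Subgroup.zpow_mem _ (Subgroup.subset_closure (by simp)) a)
        (Subgroup.zpow_mem _ (Subgroup.subset_closure (by simp)) c)
    · rw [Subgroup.closure_le]
      rintro w hw
      simp only [Set.mem_insert_iff, Set.mem_singleton_iff] at hw
      rcases hw with rfl | rfl
      · exact ⟨hg1Λ, hg1K1⟩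
      · exact ⟨hg3Λ, hg3K1⟩
  -- Part 3 : density of Λ ⊓ K₁ in K₁
  set T1 := (Λ ⊓ KOne).topologicalClosure with hT1
  have hT1c : IsClosed (T1 : Set G3) := Subgroup.isClosed_topologicalClosure _
  have hg3T1 : e3 γ ∈ T1 := Subgroup.le_topologicalClosure _ ⟨hg3Λ, hg3K1⟩
  have h3T1 : ∀ t : Circle, e3 t ∈ T1 :=
    fun t => dense_pow_mem γ dγ e3 e3_cont T1 hT1c hg3T1 t
  have hαT1 : e1 α ∈ T1 := by
    have h := T1.mul_mem (Subgroup.le_topologicalClosure _ ⟨hg1Λ, hg1K1⟩ : g1 ∈ T1)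
      (h3T1 α⁻¹)
    have heq : g1 * e3 α⁻¹ = e1 α := by
      simp [hg1, e1, e3, Prod.ext_iff]
    rwa [heq] at h
  have h1T1 : ∀ t : Circle, e1 t ∈ T1 :=
    fun t => dense_pow_mem α dα e1 e1_cont T1 hT1c hαT1 t
  have hpart3 : (KOne : Set G3) ⊆
      _root_.closure ((Λ ⊓ KOne : Subgroup G3) : Set G3) := by
    intro p hp
    rw [← Subgroup.topologicalClosure_coe]
    have hp21 : p.2.1 = 1 := by
      simpa [KOne, Subgroup.mem_prod, Subgroup.mem_bot] using hp
    have heq : p = e1 p.1 * e3 p.2.2 := by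
      simp [e1, e3, Prod.ext_iff, hp21]
    rw [heq]
    exact T1.mul_mem (h1T1 _) (h3T1 _)
  -- Part 4 : density of Λ ⊓ K₂ in K₂
  set T2 := (Λ ⊓ KTwo).topologicalClosure with hT2
  have hT2c : IsClosed (T2 : Set G3) := Subgroup.isClosed_topologicalClosure _
  have hg3T2 : e3 γ ∈ T2 := Subgroup.le_topologicalClosure _ ⟨hg3Λ, hg3K2⟩
  have h3T2 : ∀ t : Circle, e3 t ∈ T2 :=
    fun t => dense_pow_mem γ dγ e3 e3_cont T2 hT2c hg3T2 t
  have hαT2 : e2 α ∈ T2 := by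
    have h := T2.mul_mem (Subgroup.le_topologicalClosure _ ⟨hg2Λ, hg2K2⟩ : g2 ∈ T2)
      (h3T2 β⁻¹)
    have heq : g2 * e3 β⁻¹ = e2 α := by
      simp [hg2, e2, e3, Prod.ext_iff]
    rwa [heq] at h
  have h2T2 : ∀ t : Circle, e2 t ∈ T2 :=
    fun t => dense_pow_mem α dα e2 e2_cont T2 hT2c hαT2 t
  have hpart4 : (KTwo : Set G3) ⊆
      _root_.closure ((Λ ⊓ KTwo : Subgroup G3) : Set G3) := by
    intro p hp
    rw [← Subgroup.topologicalClosure_coe]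
    have hp1 : p.1 = 1 := by
      simpa [KTwo, Subgroup.mem_prod, Subgroup.mem_bot] using hp
    have heq : p = e2 p.2.1 * e3 p.2.2 := by
      simp [e2, e3, Prod.ext_iff, hp1]
    rw [heq]
    exact T2.mul_mem (h2T2 _) (h3T2 _)
  -- Part 1 : density of Λ
  have hpart1 : Dense (Λ : Set G3) := by
    set D := Λ.topologicalClosure with hD
    have hDc : IsClosed (D : Set G3) := Subgroup.isClosed_topologicalClosure _
    have hT1D : T1 ≤ D :=
      Subgroup.topologicalClosure_minimal _
        (le_trans inf_le_left (Subgroup.le_topologicalClosure Λ)) hDc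
    have hT2D : T2 ≤ D :=
      Subgroup.topologicalClosure_minimal _
        (le_trans inf_le_left (Subgroup.le_topologicalClosure Λ)) hDc
    intro p
    rw [← Subgroup.topologicalClosure_coe]
    have heq : p = e1 p.1 * (e2 p.2.1 * e3 p.2.2) := by
      simp [e1, e2, e3, Prod.ext_iff]
    rw [heq]
    exact D.mul_mem (hT1D (h1T1 _)) (D.mul_mem (hT2D (h2T2 _)) (hT2D (h3T2 _)))
  exact ⟨hpart1, hpart2, hpart3, hpart4⟩
end

section
/- Let α, β, γ ∈ 𝕋 be rationally independent, let Λ ≤ 𝕋³ be the subgroup generated by (α,1,α), (1,α,β), (1,1,γ), and let K₁ := 𝕋 × {1} × 𝕋 and K₂ := {1} × 𝕋 × 𝕋. Then ΛK₁ = 𝕋 × α^ℤ × 𝕋 and ΛK₂ = α^ℤ × 𝕋 × 𝕋, where α^ℤ = {α^n : n ∈ ℤ}. Consequently the continuous automorphism δ of 𝕋³ given by δ(x,y,z) = (y,x,z) satisfies δ(ΛK₁) = ΛK₂. -/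
/-- The continuous automorphism `δ(x,y,z) = (y,x,z)` of `𝕋³`. -/
def swapAut : (Circle × Circle × Circle) ≃* (Circle × Circle × Circle) where
  toFun p := (p.2.1, p.1, p.2.2)
  invFun p := (p.2.1, p.1, p.2.2)
  left_inv _ := rfl
  right_inv _ := rfl
  map_mul' _ _ := rfl


lemma mem_prodSubgroup {K : Type*} [CommGroup K] (A B : Subgroup K) (x : K) :
    x ∈ prodSubgroup A B ↔ ∃ a ∈ A, ∃ b ∈ B, x = a * b := Iff.rfl

lemma mid_mem (α β γ : Circle) {p : Circle × Circle × Circle}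
    (hp : p ∈ Subgroup.closure {(α, 1, α), (1, α, β), (1, 1, γ)}) :
    p.2.1 ∈ Subgroup.zpowers α := by
  have h : Subgroup.closure {(α, (1:Circle), α), (1, α, β), (1, 1, γ)} ≤
      Subgroup.comap ((MonoidHom.fst Circle Circle).comp
        (MonoidHom.snd Circle (Circle × Circle))) (Subgroup.zpowers α) := by
    rw [Subgroup.closure_le]
    rintro q hq
    simp only [Set.mem_insert_iff, Set.mem_singleton_iff] at hq
    rcases hq with rfl | rfl | rfl
    · exact ⟨0, by simp⟩
    · exact ⟨1, by simp⟩
    · exact ⟨0, by simp⟩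
  exact h hp

lemma fst_mem (α β γ : Circle) {p : Circle × Circle × Circle}
    (hp : p ∈ Subgroup.closure {(α, 1, α), (1, α, β), (1, 1, γ)}) :
    p.1 ∈ Subgroup.zpowers α := by
  have h : Subgroup.closure {(α, (1:Circle), α), (1, α, β), (1, 1, γ)} ≤
      Subgroup.comap (MonoidHom.fst Circle (Circle × Circle)) (Subgroup.zpowers α) := by
    rw [Subgroup.closure_le]
    rintro q hq
    simp only [Set.mem_insert_iff, Set.mem_singleton_iff] at hq
    rcases hq with rfl | rfl | rfl
    · exact ⟨1, by simp⟩
    · exact ⟨0, by simp⟩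
    · exact ⟨0, by simp⟩
  exact h hp

/-- Let `α, β, γ ∈ 𝕋` be rationally independent and `Λ ≤ 𝕋³` the subgroup
generated by `(α,1,α)`, `(1,α,β)`, `(1,1,γ)`.  Then `ΛK₁ = 𝕋 × α^ℤ × 𝕋` and
`ΛK₂ = α^ℤ × 𝕋 × 𝕋`; consequently the automorphism `δ(x,y,z) = (y,x,z)` of `𝕋³`
maps `ΛK₁` onto `ΛK₂`. -/
theorem prod_lambda_k_eq_and_swap
    (α β γ : Circle)
    (hindep : ∀ a b c : ℤ, α ^ a * β ^ b * γ ^ c = 1 → a = 0 ∧ b = 0 ∧ c = 0)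
    (Λ : Subgroup (Circle × Circle × Circle))
    (hΛ : Λ = Subgroup.closure {(α, 1, α), (1, α, β), (1, 1, γ)}) :
    prodSubgroup Λ KOne =
      (⊤ : Subgroup Circle).prod ((Subgroup.zpowers α).prod (⊤ : Subgroup Circle)) ∧
    prodSubgroup Λ KTwo =
      (Subgroup.zpowers α).prod ((⊤ : Subgroup Circle).prod (⊤ : Subgroup Circle)) ∧
    Subgroup.map swapAut.toMonoidHom (prodSubgroup Λ KOne) = prodSubgroup Λ KTwo := by
  subst hΛ
  have h1 : prodSubgroup (Subgroup.closure {(α, 1, α), (1, α, β), (1, 1, γ)}) KOne =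
      (⊤ : Subgroup Circle).prod ((Subgroup.zpowers α).prod (⊤ : Subgroup Circle)) := by
    ext ⟨x, y, z⟩
    simp only [Subgroup.mem_prod, Subgroup.mem_top, true_and, and_true, mem_prodSubgroup]
    constructor
    · rintro ⟨a, ha, b, hb, heq⟩
      have hb' : b.2.1 = 1 := by
        simpa [KOne, Subgroup.mem_prod, Subgroup.mem_bot] using hb
      have hy : y = a.2.1 * b.2.1 := congrArg (fun p => p.2.1) heq
      simpa [hy, hb'] using mid_mem α β γ ha
    · rintro hy
      obtain ⟨n, rfl⟩ := hy
      refine ⟨(1, α, β) ^ n, Subgroup.zpow_mem _ (Subgroup.subset_closure (by simp)) n,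
        (x, 1, z * β ^ (-n)), ?_, ?_⟩
      · simp [KOne, Subgroup.mem_prod, Subgroup.mem_bot]
      · ext <;> simp [mul_assoc, zpow_neg]
  have h2 : prodSubgroup (Subgroup.closure {(α, 1, α), (1, α, β), (1, 1, γ)}) KTwo =
      (Subgroup.zpowers α).prod ((⊤ : Subgroup Circle).prod (⊤ : Subgroup Circle)) := by
    ext ⟨x, y, z⟩
    simp only [Subgroup.mem_prod, Subgroup.mem_top, true_and, and_true, mem_prodSubgroup]
    constructor
    · rintro ⟨a, ha, b, hb, heq⟩
      have hb' : b.1 = 1 := by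
        simpa [KTwo, Subgroup.mem_prod, Subgroup.mem_bot] using hb
      have hx : x = a.1 * b.1 := congrArg (fun p => p.1) heq
      simpa [hx, hb'] using fst_mem α β γ ha
    · rintro hx
      obtain ⟨n, rfl⟩ := hx
      refine ⟨(α, 1, α) ^ n, Subgroup.zpow_mem _ (Subgroup.subset_closure (by simp)) n,
        (1, y, z * α ^ (-n)), ?_, ?_⟩
      · simp [KTwo, Subgroup.mem_prod, Subgroup.mem_bot]
      · ext <;> simp [mul_assoc, zpow_neg]
  refine ⟨h1, h2, ?_⟩
  rw [h1, h2]
  ext ⟨x, y, z⟩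
  rw [Subgroup.mem_map_equiv]
  simp [swapAut, Subgroup.mem_prod]
end

section
/- Let α, β, γ ∈ 𝕋 be rationally independent, let Λ ≤ 𝕋³ be the subgroup generated by (α,1,α), (1,α,β), (1,1,γ), and let K₁ := 𝕋 × {1} × 𝕋 and K₂ := {1} × 𝕋 × 𝕋. Then there exists no topological group automorphism δ of 𝕋³ (i.e. a group automorphism that is a homeomorphism) satisfying both δ(Λ) = Λ and δ(ΛK₁) = ΛK₂. -/
open Real

lemma circleExp_nat_mul (x : ℝ) : ∀ m : ℕ, Circle.exp x ^ m = Circle.exp (m * x)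
  | 0 => by simp
  | m + 1 => by
    rw [pow_succ, circleExp_nat_mul x m, ← Circle.exp_add]
    congr 1
    push_cast
    ring

lemma circleExp_int_mul (x : ℝ) (j : ℤ) : Circle.exp x ^ j = Circle.exp (j * x) := by
  cases j with
  | ofNat m => simpa using circleExp_nat_mul x m
  | negSucc m =>
      rw [zpow_negSucc, circleExp_nat_mul, ← Circle.exp_neg]
      congr 1
      push_cast
      ring

/-- Every continuous homomorphism of the circle group is `z ↦ z ^ n` for some integer `n`. -/
lemma circleHom_eq_zpow (f : Circle →* Circle) (hf : Continuous f) :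
    ∃ n : ℤ, ∀ z : Circle, f z = z ^ n := by
  have hcont : Continuous fun t : ℝ => ((f (Circle.exp t) : ℂ)).re :=
    Complex.continuous_re.comp ((continuous_subtype_val.comp hf).comp Circle.exp.continuous)
  have h0 : ((f (Circle.exp 0) : ℂ)).re = 1 := by
    rw [Circle.exp_zero, map_one]; simp
  obtain ⟨dd, hδpos, hδ⟩ : ∃ dd > 0, ∀ t : ℝ, |t| < dd → 0 < ((f (Circle.exp t) : ℂ)).re := by
    have h1 : Filter.Tendsto (fun t : ℝ => ((f (Circle.exp t) : ℂ)).re) (nhds 0) (nhds 1) := by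
      simpa [h0] using hcont.tendsto 0
    have h2 : ∀ᶠ t : ℝ in nhds 0, 0 < ((f (Circle.exp t) : ℂ)).re :=
      h1.eventually (eventually_gt_nhds one_pos)
    rw [Metric.eventually_nhds_iff] at h2
    obtain ⟨ε, hε, h⟩ := h2
    exact ⟨ε, hε, fun t ht => h (by simpa [Real.dist_eq] using ht)⟩
  obtain ⟨k₀, hk₀⟩ : ∃ k : ℕ, 2 * π / 2 ^ k < dd := by
    obtain ⟨k, hk⟩ := pow_unbounded_of_one_lt (2 * π / dd) (one_lt_two (α := ℝ))
    refine ⟨k, ?_⟩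
    rw [div_lt_iff₀ (by positivity)]
    rw [div_lt_iff₀ hδpos] at hk
    nlinarith [Real.pi_pos]
  set T : ℕ → ℝ := fun k => 2 * π / 2 ^ (k₀ + k) with hT
  have hTpos : ∀ k, 0 < T k := by
    intro k
    have := Real.pi_pos
    positivity
  have hTδ : ∀ k, |T k| < dd := by
    intro k
    rw [abs_of_pos (hTpos k)]
    calc T k ≤ 2 * π / 2 ^ k₀ := by
          apply div_le_div_of_nonneg_left (by positivity) (by positivity)
          exact pow_le_pow_right₀ one_le_two (Nat.le_add_right _ _)
      _ < dd := hk₀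
  have hT2 : ∀ k, T k = T (k + 1) + T (k + 1) := by
    intro k
    simp only [hT]
    rw [show k₀ + (k + 1) = (k₀ + k) + 1 by ring, pow_succ]
    field_simp
    ring
  have hT2pi : ∀ k, (2 ^ (k₀ + k) : ℝ) * T k = 2 * π := by
    intro k
    simp only [hT]
    field_simp
  -- the values on the dyadic points
  set F : ℕ → Circle := fun k => f (Circle.exp (T k)) with hF
  set θ : ℕ → ℝ := fun k => Complex.arg (F k) with hθdef
  have hre : ∀ k, 0 < ((F k : ℂ)).re := fun k => hδ _ (hTδ k)
  have hθbound : ∀ k, |θ k| < π / 2 := fun k =>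
    Complex.abs_arg_lt_pi_div_two_iff.mpr (Or.inl (hre k))
  have hFθ : ∀ k, F k = Circle.exp (θ k) := fun k => (Circle.exp_arg (F k)).symm
  have hdouble : ∀ k, θ k = θ (k + 1) + θ (k + 1) := by
    intro k
    have h1 : F k = Circle.exp (θ (k + 1) + θ (k + 1)) := by
      rw [Circle.exp_add, ← hFθ (k + 1)]
      simp only [hF]
      rw [← map_mul, ← Circle.exp_add, ← hT2 k]
    have h2 : θ k = Complex.arg (Circle.exp (θ (k + 1) + θ (k + 1)) : Circle) := by
      rw [hθdef, ← h1]
    have hb := hθbound (k + 1)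
    rw [abs_lt] at hb
    rw [h2, Circle.arg_exp (by linarith) (by linarith [Real.pi_pos])]
  have hchain : ∀ k, θ 0 = 2 ^ k * θ k := by
    intro k
    induction k with
    | zero => simp
    | succ k ih => rw [ih, hdouble k, pow_succ]; ring
  have hper : ∀ k, ∃ j : ℤ, (2 ^ (k₀ + k) : ℝ) * θ k = j * (2 * π) := by
    intro k
    have h1 : F k ^ ((2 : ℕ) ^ (k₀ + k)) = 1 := by
      simp only [hF]
      rw [← map_pow, circleExp_nat_mul]
      have : ((2 ^ (k₀ + k) : ℕ) : ℝ) * T k = 2 * π := by push_cast; exact hT2pi k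
      rw [this, Circle.exp_two_pi, map_one]
    rw [hFθ k, circleExp_nat_mul] at h1
    obtain ⟨j, hj⟩ := Circle.exp_eq_one.mp h1
    exact ⟨j, by push_cast at hj ⊢; linarith [hj]⟩
  obtain ⟨n, hn⟩ := hper 0
  have hkey2 : ∀ k, f (Circle.exp (T k)) = Circle.exp (T k) ^ n := by
    intro k
    have hkey : θ k = n * T k := by
      have h1 : (2 ^ (k₀ + k) : ℝ) * θ k = 2 ^ (k₀ + 0) * θ 0 := by
        rw [hchain k]; rw [pow_add, pow_add]; ring
      have h2 : (2 ^ (k₀ + k) : ℝ) * θ k = n * ((2 ^ (k₀ + k) : ℝ) * T k) := by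
        rw [h1, hn, ← hT2pi k]
      have h3 : (2 ^ (k₀ + k) : ℝ) * θ k = (2 ^ (k₀ + k) : ℝ) * (n * T k) := by
        rw [h2]; ring
      exact mul_left_cancel₀ (by positivity) h3
    rw [circleExp_int_mul, ← hkey, ← hFθ k]
  have hD : ∀ (j : ℤ) (k : ℕ), f (Circle.exp (j * T k)) = Circle.exp (j * T k) ^ n := by
    intro j k
    rw [← circleExp_int_mul, map_zpow, hkey2 k, ← zpow_mul, ← zpow_mul, mul_comm]
  -- density
  have hTlim : Filter.Tendsto T Filter.atTop (nhds 0) := by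
    apply squeeze_zero (fun k => (hTpos k).le) (g := fun k => 2 * π * (1 / 2 : ℝ) ^ k)
    · intro k
      have h1 : T k = 2 * π / 2 ^ (k₀ + k) := rfl
      calc T k = 2 * π / 2 ^ (k₀ + k) := h1
        _ ≤ 2 * π / 2 ^ k := by
            apply div_le_div_of_nonneg_left (by positivity) (by positivity)
            exact pow_le_pow_right₀ one_le_two (Nat.le_add_left _ _)
        _ = 2 * π * (1 / 2 : ℝ) ^ k := by rw [div_pow, one_pow]; ring
    · have := (tendsto_pow_atTop_nhds_zero_of_lt_one (by norm_num : (0:ℝ) ≤ 1/2)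
        (by norm_num)).const_mul (2 * π)
      simpa using this
  have hdense : Dense (Set.range fun p : ℤ × ℕ => Circle.exp (p.1 * T p.2)) := by
    intro z
    refine mem_closure_of_tendsto
      (f := fun k : ℕ => Circle.exp ((⌊Complex.arg (z : ℂ) / T k⌋ : ℝ) * T k))
      (b := Filter.atTop) ?_ ?_
    · have harg : Filter.Tendsto (fun k : ℕ => (⌊Complex.arg (z : ℂ) / T k⌋ : ℝ) * T k)
          Filter.atTop (nhds (Complex.arg (z : ℂ))) := by
        set x := Complex.arg (z : ℂ)
        have hle : ∀ k, (⌊x / T k⌋ : ℝ) * T k ≤ x := by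
          intro k
          calc (⌊x / T k⌋ : ℝ) * T k ≤ (x / T k) * T k :=
                mul_le_mul_of_nonneg_right (Int.floor_le _) (hTpos k).le
            _ = x := div_mul_cancel₀ x (hTpos k).ne'
        have hge : ∀ k, x - T k ≤ (⌊x / T k⌋ : ℝ) * T k := by
          intro k
          have h1 : x / T k - 1 ≤ (⌊x / T k⌋ : ℝ) := by
            have := Int.sub_one_lt_floor (x / T k)
            linarith
          have h2 := mul_le_mul_of_nonneg_right h1 (hTpos k).le
          have h3 : (x / T k - 1) * T k = x - T k := by
            rw [sub_mul, div_mul_cancel₀ x (hTpos k).ne', one_mul]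
          linarith [h3 ▸ h2]
        apply tendsto_of_tendsto_of_tendsto_of_le_of_le (g := fun k => x - T k) (h := fun _ => x)
        · simpa using (tendsto_const_nhds (x := x)).sub hTlim
        · exact tendsto_const_nhds
        · exact hge
        · exact hle
      have hcont := (Circle.exp.continuous.tendsto (Complex.arg (z : ℂ))).comp harg
      rw [Circle.exp_arg] at hcont
      exact hcont
    · exact Filter.Eventually.of_forall fun k => ⟨(⌊Complex.arg (z : ℂ) / T k⌋, k), rfl⟩
  have heq : ⇑f = fun z : Circle => z ^ n := by
    apply Continuous.ext_on hdense hf (continuous_zpow n)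
    rintro _ ⟨⟨j, k⟩, rfl⟩
    exact hD j k
  exact ⟨n, fun z => congrFun heq z⟩

/-- Let `α, β, γ ∈ 𝕋` be rationally independent and `Λ ≤ 𝕋³` the subgroup
generated by `(α,1,α)`, `(1,α,β)`, `(1,1,γ)`.  Then there exists no topological group
automorphism `δ` of `𝕋³` satisfying both `δ(Λ) = Λ` and `δ(ΛK₁) = ΛK₂`. -/
theorem no_automorphism_preserving_lambda_swapping
    (α β γ : Circle)
    (hindep : ∀ a b c : ℤ, α ^ a * β ^ b * γ ^ c = 1 → a = 0 ∧ b = 0 ∧ c = 0)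
    (Λ : Subgroup (Circle × Circle × Circle))
    (hΛ : Λ = Subgroup.closure {(α, 1, α), (1, α, β), (1, 1, γ)}) :
    ¬ ∃ δ : (Circle × Circle × Circle) ≃* (Circle × Circle × Circle),
      Continuous δ ∧ Continuous δ.symm ∧
      Subgroup.map δ.toMonoidHom Λ = Λ ∧
      Subgroup.map δ.toMonoidHom (prodSubgroup Λ KOne) = prodSubgroup Λ KTwo := by
  have hα : ∀ a : ℤ, α ^ a = 1 → a = 0 := fun a h => (hindep a 0 0 (by simpa using h)).1
  have hαne : α ≠ 1 := by
    intro h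
    have := hα 1 (by simp [h])
    norm_num at this
  -- membership characterisation of Λ
  have hmem₁ : ∀ a b c : ℤ,
      ((α ^ a, α ^ b, α ^ a * β ^ b * γ ^ c) : Circle × Circle × Circle) ∈ Λ := by
    intro a b c
    rw [hΛ]
    have h1 : ((α, 1, α) : Circle × Circle × Circle) ∈
        Subgroup.closure {((α, 1, α) : Circle × Circle × Circle), (1, α, β), (1, 1, γ)} :=
      Subgroup.subset_closure (by simp)
    have h2 : ((1, α, β) : Circle × Circle × Circle) ∈
        Subgroup.closure {((α, 1, α) : Circle × Circle × Circle), (1, α, β), (1, 1, γ)} :=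
      Subgroup.subset_closure (by simp)
    have h3 : ((1, 1, γ) : Circle × Circle × Circle) ∈
        Subgroup.closure {((α, 1, α) : Circle × Circle × Circle), (1, α, β), (1, 1, γ)} :=
      Subgroup.subset_closure (by simp)
    have key : ((α ^ a, α ^ b, α ^ a * β ^ b * γ ^ c) : Circle × Circle × Circle)
        = (α, 1, α) ^ a * ((1, α, β) ^ b * (1, 1, γ) ^ c) := by
      show _ = ((α ^ a, 1 ^ a, α ^ a) : Circle × Circle × Circle) *
        ((1 ^ b, α ^ b, β ^ b) * (1 ^ c, 1 ^ c, γ ^ c))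
      simp [Prod.mk_mul_mk, mul_assoc]
    rw [key]
    exact mul_mem (zpow_mem h1 a) (mul_mem (zpow_mem h2 b) (zpow_mem h3 c))
  have hmem₂ : ∀ x ∈ Λ, ∃ a b c : ℤ,
      x = ((α ^ a, α ^ b, α ^ a * β ^ b * γ ^ c) : Circle × Circle × Circle) := by
    intro x hx
    rw [hΛ] at hx
    induction hx using Subgroup.closure_induction with
    | mem x hx =>
        simp only [Set.mem_insert_iff, Set.mem_singleton_iff] at hx
        rcases hx with rfl | rfl | rfl
        · exact ⟨1, 0, 0, by simp⟩
        · exact ⟨0, 1, 0, by simp⟩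
        · exact ⟨0, 0, 1, by simp⟩
    | one => exact ⟨0, 0, 0, by simp; rfl⟩
    | mul x y hx hy ihx ihy =>
        obtain ⟨a, b, c, rfl⟩ := ihx
        obtain ⟨a', b', c', rfl⟩ := ihy
        refine ⟨a + a', b + b', c + c', ?_⟩
        simp only [Prod.mk_mul_mk, zpow_add]
        refine Prod.ext rfl (Prod.ext rfl ?_)
        show α ^ a * β ^ b * γ ^ c * (α ^ a' * β ^ b' * γ ^ c') =
          α ^ a * α ^ a' * (β ^ b * β ^ b') * (γ ^ c * γ ^ c')
        simp [mul_comm, mul_left_comm, mul_assoc]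
    | inv x hx ihx =>
        obtain ⟨a, b, c, rfl⟩ := ihx
        refine ⟨-a, -b, -c, ?_⟩
        simp only [Prod.inv_mk, zpow_neg]
        refine Prod.ext rfl (Prod.ext rfl ?_)
        show (α ^ a * β ^ b * γ ^ c)⁻¹ = (α ^ a)⁻¹ * (β ^ b)⁻¹ * (γ ^ c)⁻¹
        simp [mul_comm, mul_left_comm, mul_assoc]
  -- K₁ and ΛK₂ facts
  have hK1mem : ∀ t u : Circle, ((t, 1, u) : Circle × Circle × Circle) ∈ KOne := by
    intro t u
    rw [KOne, Subgroup.mem_prod]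
    refine ⟨trivial, ?_⟩
    rw [Subgroup.mem_prod]
    exact ⟨Subgroup.mem_bot.mpr rfl, trivial⟩
  have hΛK1 : ∀ t u : Circle, ((t, 1, u) : Circle × Circle × Circle) ∈ prodSubgroup Λ KOne :=
    fun t u => ⟨1, one_mem _, (t, 1, u), hK1mem t u, (one_mul _).symm⟩
  have hΛK2fst : ∀ x ∈ prodSubgroup Λ KTwo, ∃ a : ℤ, x.1 = α ^ a := by
    rintro x ⟨l, hl, w, hw, rfl⟩
    obtain ⟨a, b, c, rfl⟩ := hmem₂ l hl
    have hw1 : w.1 = 1 := by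
      rw [KTwo, Subgroup.mem_prod] at hw
      simpa using hw.1
    exact ⟨a, by simp [hw1]⟩
  rintro ⟨de, hdc, -, hΛmap, hKmap⟩
  have hδK : ∀ x ∈ prodSubgroup Λ KOne, de x ∈ prodSubgroup Λ KTwo := by
    intro x hx
    rw [← hKmap]
    exact Subgroup.mem_map.mpr ⟨x, hx, rfl⟩
  -- the six coordinate homomorphisms
  let j1 : Circle →* Circle × Circle × Circle := (MonoidHom.id Circle).prod 1
  let j3 : Circle →* Circle × Circle × Circle :=
    (1 : Circle →* Circle).prod ((1 : Circle →* Circle).prod (MonoidHom.id Circle))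
  have hj1 : ∀ t, j1 t = (t, 1, 1) := fun t => rfl
  have hj3 : ∀ t, j3 t = (1, 1, t) := fun t => rfl
  let π₁ : (Circle × Circle × Circle) →* Circle := MonoidHom.fst Circle (Circle × Circle)
  let π₂ : (Circle × Circle × Circle) →* Circle :=
    (MonoidHom.fst Circle Circle).comp (MonoidHom.snd Circle (Circle × Circle))
  let π₃ : (Circle × Circle × Circle) →* Circle :=
    (MonoidHom.snd Circle Circle).comp (MonoidHom.snd Circle (Circle × Circle))
  have hcont1 : Continuous fun t : Circle => de (t, 1, 1) :=
    hdc.comp (continuous_id.prodMk continuous_const)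
  have hcont3 : Continuous fun t : Circle => de (1, 1, t) :=
    hdc.comp (continuous_const.prodMk (continuous_const.prodMk continuous_id))
  -- zero exponent criterion
  have hzero : ∀ (g : Circle →* Circle) (m : ℤ), (∀ t, g t = t ^ m) →
      (∀ t, ∃ a : ℤ, g t = α ^ a) → ∀ t, g t = 1 := by
    intro g m hg ha
    suffices hm : m = 0 by intro t; rw [hg t, hm, zpow_zero]
    by_contra hm
    obtain ⟨N, hNgt⟩ : ∃ N : ℕ, m.natAbs < N := ⟨m.natAbs + 1, Nat.lt_succ_self _⟩
    have hNR : (N : ℝ) ≠ 0 := Nat.cast_ne_zero.mpr (by omega)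
    set t : Circle := Circle.exp (2 * π / N) with ht
    obtain ⟨a, hta⟩ := ha t
    rw [hg] at hta
    have htN : t ^ ((N : ℕ) : ℤ) = 1 := by
      rw [zpow_natCast, ht, circleExp_nat_mul, mul_div_cancel₀ _ hNR, Circle.exp_two_pi]
    have h1 : α ^ (a * N) = 1 := by
      rw [zpow_mul, ← hta, ← zpow_mul, mul_comm, zpow_mul, htN, one_zpow]
    have ha0 : a = 0 := by
      have := hα _ h1
      rcases mul_eq_zero.mp this with h | h
      · exact h
      · exfalso; omega
    rw [ha0, zpow_zero] at hta
    rw [ht, circleExp_int_mul] at hta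
    obtain ⟨j, hj⟩ := Circle.exp_eq_one.mp hta
    have hπ : (0:ℝ) < 2 * π := by positivity
    have hcast : (m : ℝ) = (j : ℝ) * N := by
      have h2 : (m : ℝ) * (2 * π) = (j : ℝ) * N * (2 * π) := by
        field_simp at hj
        nlinarith [hj]
      exact mul_right_cancel₀ (ne_of_gt hπ) h2
    have hmjN : m = j * (N : ℤ) := by exact_mod_cast hcast
    have hj0 : j ≠ 0 := by
      intro h
      rw [h, zero_mul] at hmjN
      exact hm hmjN
    have h3 : m.natAbs = j.natAbs * N := by
      rw [hmjN, Int.natAbs_mul, Int.natAbs_natCast]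
    have h4 : 1 ≤ j.natAbs := Nat.one_le_iff_ne_zero.mpr (Int.natAbs_ne_zero.mpr hj0)
    have h5 : N ≤ j.natAbs * N := Nat.le_mul_of_pos_left N h4
    have h6 : N ≤ m.natAbs := h3 ▸ h5
    omega
  -- apply the classification to all six homs
  obtain ⟨m1, hm1⟩ := circleHom_eq_zpow (π₁.comp (de.toMonoidHom.comp j1)) (hcont1.fst)
  obtain ⟨p, hp⟩ := circleHom_eq_zpow (π₂.comp (de.toMonoidHom.comp j1)) (hcont1.snd.fst)
  obtain ⟨r, hr⟩ := circleHom_eq_zpow (π₃.comp (de.toMonoidHom.comp j1)) (hcont1.snd.snd)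
  obtain ⟨m3, hm3⟩ := circleHom_eq_zpow (π₁.comp (de.toMonoidHom.comp j3)) (hcont3.fst)
  obtain ⟨q, hq⟩ := circleHom_eq_zpow (π₂.comp (de.toMonoidHom.comp j3)) (hcont3.snd.fst)
  obtain ⟨s, hs⟩ := circleHom_eq_zpow (π₃.comp (de.toMonoidHom.comp j3)) (hcont3.snd.snd)
  -- first coordinates vanish
  have hfst1 : ∀ t : Circle, (de (t, 1, 1)).1 = 1 :=
    hzero (π₁.comp (de.toMonoidHom.comp j1)) m1 hm1
      (fun t => hΛK2fst _ (hδK _ (hΛK1 t 1)))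
  have hfst3 : ∀ t : Circle, (de (1, 1, t)).1 = 1 :=
    hzero (π₁.comp (de.toMonoidHom.comp j3)) m3 hm3
      (fun t => hΛK2fst _ (hδK _ ⟨1, one_mem _, (1, 1, t), hK1mem 1 t, (one_mul _).symm⟩))
  -- compute δ(α,1,α)
  have hδ1 : ∀ t : Circle, de (t, 1, 1) = (1, t ^ p, t ^ r) := by
    intro t
    exact Prod.ext (hfst1 t) (Prod.ext (hp t) (hr t))
  have hδ3 : ∀ t : Circle, de (1, 1, t) = (1, t ^ q, t ^ s) := by
    intro t
    exact Prod.ext (hfst3 t) (Prod.ext (hq t) (hs t))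
  have hg1 : de (α, 1, α) = (1, α ^ (p + q), α ^ (r + s)) := by
    have hsplit : ((α, 1, α) : Circle × Circle × Circle) = (α, 1, 1) * (1, 1, α) := by
      simp [Prod.mk_mul_mk]
    rw [hsplit, map_mul, hδ1, hδ3, Prod.mk_mul_mk, Prod.mk_mul_mk, one_mul, zpow_add, zpow_add]
  have hg1Λ : de (α, 1, α) ∈ Λ := by
    rw [← hΛmap]
    refine Subgroup.mem_map.mpr ⟨_, ?_, rfl⟩
    simpa using hmem₁ 1 0 0
  obtain ⟨a, b, c, heq⟩ := hmem₂ _ hg1Λ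
  rw [hg1, Prod.mk.injEq, Prod.mk.injEq] at heq
  obtain ⟨heq1, heq2, heq3⟩ := heq
  have ha0 : a = 0 := hα a heq1.symm
  rw [ha0, zpow_zero, one_mul] at heq3
  have h4 : α ^ (r + s) * β ^ (-b) * γ ^ (-c) = 1 := by
    rw [heq3, zpow_neg, zpow_neg]
    simp [mul_comm, mul_left_comm, mul_assoc]
  obtain ⟨hrs, hbneg, hcneg⟩ := hindep _ _ _ h4
  have hb0 : b = 0 := by omega
  have hpq : p + q = 0 := by
    apply hα
    rw [heq2, hb0, zpow_zero]
  have hone : de (α, 1, α) = 1 := by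
    rw [hg1, hpq, hrs, zpow_zero]
    rfl
  have : ((α, 1, α) : Circle × Circle × Circle) = 1 := de.injective (by rw [hone, map_one])
  rw [Prod.mk.injEq] at this
  exact hαne this.1
end

section
/- Let G = H ≀_I Γ be a generalized wreath product of countable groups and let Λ ≤ G be a subgroup. Suppose there exists a square-summable function ξ : H × I → ℂ such that for every (h, γ) ∈ Λ and every (k, i) ∈ H × I one has ξ(k, i) = ξ(h_i⁻¹k, γ⁻¹·i) − 1_{[h_i⁻¹k = e]} + 1_{[k = e]}. Then either there exist i ∈ I and a finite-index subgroup Λ₀ ≤ Λ with Λ₀ ⊆ H ≀_I Stab i, or there exists b ∈ H^(I) such that b⁻¹Λb ⊆ Γ. -/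
/-- The subgroup `H^(I)` of finitely supported elements of `I → H`. -/
def FinSuppSubgroup (H I : Type*) [Group H] : Subgroup (I → H) where
  carrier := {h | {i | h i ≠ 1}.Finite}
  one_mem' := by simp
  mul_mem' := by
    intro a b ha hb
    apply (ha.union hb).subset
    intro i hi
    by_contra hc
    simp only [Set.mem_union, Set.mem_setOf_eq, not_or, not_not] at hc
    exact hi (by simp [Pi.mul_apply, hc.1, hc.2])
  inv_mem' := by
    intro a ha
    apply ha.subset
    intro i hi
    simp only [Set.mem_setOf_eq, Pi.inv_apply, ne_eq, inv_eq_one] at hi ⊢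
    exact hi

/-- The Bernoulli shift automorphism of `H^(I)` associated with `γ ∈ Γ`. -/
def shiftEquiv (H I Γ : Type*) [Group H] [Group Γ] [MulAction Γ I] (γ : Γ) :
    FinSuppSubgroup H I ≃* FinSuppSubgroup H I where
  toFun x := ⟨fun i => (x : I → H) (γ⁻¹ • i), by
    have hx : {i | (x : I → H) i ≠ 1}.Finite := x.2
    show {i | (x : I → H) (γ⁻¹ • i) ≠ 1}.Finite
    apply (hx.image (fun i => γ • i)).subset
    intro i hi
    exact ⟨γ⁻¹ • i, hi, smul_inv_smul γ i⟩⟩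
  invFun x := ⟨fun i => (x : I → H) (γ • i), by
    have hx : {i | (x : I → H) i ≠ 1}.Finite := x.2
    show {i | (x : I → H) (γ • i) ≠ 1}.Finite
    apply (hx.image (fun i => γ⁻¹ • i)).subset
    intro i hi
    exact ⟨γ • i, hi, inv_smul_smul γ i⟩⟩
  left_inv x := Subtype.ext (funext fun i => by simp)
  right_inv x := Subtype.ext (funext fun i => by simp)
  map_mul' x y := rfl

/-- The action of `Γ` on `H^(I)` by shifting indices, as a homomorphism into the
automorphism group. -/
def shiftHom (H I Γ : Type*) [Group H] [Group Γ] [MulAction Γ I] :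
    Γ →* MulAut (FinSuppSubgroup H I) where
  toFun γ := shiftEquiv H I Γ γ
  map_one' := by
    apply MulEquiv.ext
    intro x
    exact Subtype.ext (funext fun i => by simp [shiftEquiv])
  map_mul' γ₁ γ₂ := by
    apply MulEquiv.ext
    intro x
    exact Subtype.ext (funext fun i => by simp [shiftEquiv, mul_smul])

/-- The generalized wreath product `G = H ≀_I Γ = H^(I) ⋊ Γ`. -/
abbrev WreathProduct (H I Γ : Type*) [Group H] [Group Γ] [MulAction Γ I] :=
  FinSuppSubgroup H I ⋊[shiftHom H I Γ] Γ

section Aux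

variable {H Γ I : Type*} [Group H] [Group Γ] [MulAction Γ I]

lemma shiftHom_apply_coe (γ : Γ) (n : FinSuppSubgroup H I) (i : I) :
    ((shiftHom H I Γ γ n : FinSuppSubgroup H I) : I → H) i = (n : I → H) (γ⁻¹ • i) := rfl

end Aux

/-- Let `G = H ≀_I Γ` be a generalized wreath product of countable groups
and `Λ ≤ G` a subgroup.  Suppose there is a square-summable `ξ : H × I → ℂ` such that for
every `(h, γ) ∈ Λ` and every `(k, i)` one has
`ξ(k, i) = ξ(h_i⁻¹k, γ⁻¹·i) − 1_{[h_i⁻¹k = e]} + 1_{[k = e]}`.  Then either a finite-index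
subgroup of `Λ` is contained in `H ≀_I Stab i` for some `i ∈ I`, or some `b ∈ H^(I)`
satisfies `b⁻¹Λb ⊆ Γ`. -/
theorem wreath_relative_T_dichotomy
    {H Γ I : Type*} [Group H] [Countable H] [Group Γ] [Countable Γ]
    [Countable I] [MulAction Γ I] [DecidableEq H]
    (Λ : Subgroup (WreathProduct H I Γ))
    (ξ : H × I → ℂ) (hξ : Memℓp ξ 2)
    (hcocycle : ∀ g ∈ Λ, ∀ k : H, ∀ i : I,
      ξ (k, i) = ξ (((g.left : I → H) i)⁻¹ * k, g.right⁻¹ • i)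
        - (if ((g.left : I → H) i)⁻¹ * k = 1 then (1 : ℂ) else 0)
        + (if k = 1 then (1 : ℂ) else 0)) :
    (∃ (i : I) (Λ₀ : Subgroup (WreathProduct H I Γ)), Λ₀ ≤ Λ ∧
      (Λ₀.subgroupOf Λ).index ≠ 0 ∧ ∀ g ∈ Λ₀, g.right • i = i) ∨
    (∃ b : FinSuppSubgroup H I, ∀ g ∈ Λ,
      (SemidirectProduct.inl b)⁻¹ * g * SemidirectProduct.inl b ∈
        (SemidirectProduct.inr : Γ →* WreathProduct H I Γ).range) := by
  classical
  letI : MulAction Λ I := MulAction.compHom I (SemidirectProduct.rightHom.comp Λ.subtype)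
  have hsmul : ∀ (g : Λ) (i : I), g • i = (g : WreathProduct H I Γ).right • i := fun _ _ => rfl
  by_cases hfin : ∃ i : I, (MulAction.stabilizer Λ i).index ≠ 0
  · left
    obtain ⟨i, hi⟩ := hfin
    refine ⟨i, Λ ⊓ (MulAction.stabilizer Γ i).comap SemidirectProduct.rightHom,
      inf_le_left, ?_, ?_⟩
    · have heq : (Λ ⊓ (MulAction.stabilizer Γ i).comap SemidirectProduct.rightHom).subgroupOf Λ
          = MulAction.stabilizer Λ i := by
        ext g
        rw [Subgroup.mem_subgroupOf, Subgroup.mem_inf, MulAction.mem_stabilizer_iff]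
        constructor
        · rintro ⟨-, h⟩
          exact h
        · intro h
          exact ⟨g.2, h⟩
      rw [heq]
      exact hi
    · intro g hg
      exact (Subgroup.mem_inf.mp hg).2
  · right
    push_neg at hfin
    -- all orbits in `I` are infinite
    have horb : ∀ i : I, (MulAction.orbit Λ i).Infinite := by
      intro i
      have h1 := MulAction.index_stabilizer Λ i
      rw [hfin i] at h1
      intro hf
      have h2 := (Set.ncard_eq_zero hf).mp h1.symm
      exact absurd (h2 ▸ MulAction.mem_orbit_self i) (Set.notMem_empty i)
    -- the invariant function μ
    set μ : H × I → ℂ := fun x => (if x.1 = 1 then (1 : ℂ) else 0) - ξ x with hμdef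
    -- level sets of ξ are finite
    have hlevel : ∀ v : ℂ, v ≠ 0 → {x : H × I | ξ x = v}.Finite := by
      intro v hv
      have hsum : Summable (fun x : H × I => ‖ξ x‖ ^ (2 : ENNReal).toReal) :=
        hξ.summable (by norm_num)
      have hpos : (0 : ℝ) < ‖v‖ ^ (2 : ENNReal).toReal :=
        Real.rpow_pos_of_pos (norm_pos_iff.mpr hv) _
      have hev := hsum.tendsto_cofinite_zero.eventually_lt_const hpos
      rw [Filter.eventually_cofinite] at hev
      apply hev.subset
      intro x hx
      simp only [Set.mem_setOf_eq] at hx ⊢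
      rw [hx]
      exact lt_irrefl _
    -- the partial action map
    set σ : WreathProduct H I Γ → H × I → H × I := fun g x =>
      ((g.left : I → H) (g.right • x.2) * x.1, g.right • x.2) with hσdef
    -- invariance of μ
    have hμinv : ∀ g ∈ Λ, ∀ x : H × I, μ (σ g x) = μ x := by
      intro g hg x
      have h := hcocycle g hg ((g.left : I → H) (g.right • x.2) * x.1) (g.right • x.2)
      rw [inv_mul_cancel_left, inv_smul_smul] at h
      simp only [hμdef, hσdef]
      rw [h]
      ring_nf
    -- computation of σ of the inverse
    have hσinv : ∀ (g : WreathProduct H I Γ) (k : H) (i : I),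
        σ g⁻¹ (k, g.right • i) = (((g.left : I → H) (g.right • i))⁻¹ * k, i) := by
      intro g k i
      simp only [hσdef, SemidirectProduct.inv_left, SemidirectProduct.inv_right,
        inv_smul_smul, shiftHom_apply_coe, inv_inv]
      simp
    -- μ only takes values 0 and 1
    have hval : ∀ x : H × I, μ x = 0 ∨ μ x = 1 := by
      intro x
      set O : Set (H × I) := Set.range (fun g : Λ => σ (g : WreathProduct H I Γ) x) with hOdef
      have hOμ : ∀ y ∈ O, μ y = μ x := by
        rintro y ⟨g, rfl⟩
        exact hμinv _ g.2 x
      have hOinf : O.Infinite := by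
        have himg : Prod.snd '' O = MulAction.orbit Λ x.2 := by
          rw [hOdef, ← Set.range_comp]
          rfl
        exact Set.Infinite.of_image _ (himg ▸ horb x.2)
      by_contra hc
      push_neg at hc
      obtain ⟨hc0, hc1⟩ := hc
      have h1 : (O ∩ {y : H × I | y.1 = 1}).Finite := by
        apply (hlevel (1 - μ x) (sub_ne_zero.mpr (Ne.symm hc1))).subset
        rintro y ⟨hyO, hy1⟩
        have := hOμ y hyO
        simp only [hμdef] at this
        simp only [Set.mem_setOf_eq] at hy1 ⊢
        rw [if_pos hy1] at this
        linear_combination -this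
      have h2 : (O \ {y : H × I | y.1 = 1}).Finite := by
        apply (hlevel (-μ x) (neg_ne_zero.mpr hc0)).subset
        rintro y ⟨hyO, hy1⟩
        have := hOμ y hyO
        simp only [hμdef] at this
        simp only [Set.mem_setOf_eq] at hy1 ⊢
        rw [if_neg hy1] at this
        linear_combination -this
      refine hOinf ((h1.union h2).subset ?_)
      intro y hy
      by_cases hy1 : y.1 = 1
      · exact Or.inl ⟨hy, hy1⟩
      · exact Or.inr ⟨hy, hy1⟩
    -- transport of existence-uniqueness along the action
    have htrans : ∀ g ∈ Λ, ∀ i : I, (∃! k : H, μ (k, i) = 1) →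
        (∃! k : H, μ (k, g.right • i) = 1) := by
      intro g hg i h
      obtain ⟨k₀, hk₀, huniq⟩ := h
      refine ⟨(g.left : I → H) (g.right • i) * k₀, ?_, ?_⟩
      · have := hμinv g hg (k₀, i)
        rw [hk₀] at this
        exact this
      · intro k hk
        have hmem : μ (((g.left : I → H) (g.right • i))⁻¹ * k, i) = 1 := by
          have h1 := hμinv g⁻¹ (inv_mem hg) (k, g.right • i)
          rw [hσinv g k i] at h1
          rw [h1]
          exact hk
        have := huniq _ hmem
        rw [inv_mul_eq_iff_eq_mul] at this
        rw [this]
    -- existence and uniqueness everywhere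
    have hex : ∀ i : I, ∃! k : H, μ (k, i) = 1 := by
      by_contra hc
      push_neg at hc
      obtain ⟨i₀, hi₀⟩ := hc
      set Bad : Set I := {i : I | ¬ ∃! k : H, μ (k, i) = 1} with hBadDef
      have hBadsub : Bad ⊆ Prod.snd '' ({x : H × I | ξ x = -1} ∪ {x : H × I | ξ x = 1}) := by
        intro i hi
        by_cases h1 : μ (1, i) = 1
        · have hne : ∃ k : H, μ (k, i) = 1 ∧ k ≠ 1 := by
            by_contra hcc
            push_neg at hcc
            exact hi ⟨1, h1, fun k hk => hcc k hk⟩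
          obtain ⟨k, hk, hk1⟩ := hne
          refine ⟨(k, i), Or.inl ?_, rfl⟩
          simp only [hμdef] at hk
          rw [if_neg hk1] at hk
          simp only [Set.mem_setOf_eq]
          linear_combination -hk
        · have h0 : μ (1, i) = 0 := (hval (1, i)).resolve_right h1
          refine ⟨(1, i), Or.inr ?_, rfl⟩
          simp only [hμdef, eq_self_iff_true, if_true] at h0
          simp only [Set.mem_setOf_eq]
          linear_combination -h0
      have hBadfin : Bad.Finite :=
        (((hlevel (-1) (by norm_num)).union (hlevel 1 one_ne_zero)).image Prod.snd).subset hBadsub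
      have hOrbBad : MulAction.orbit Λ i₀ ⊆ Bad := by
        rintro j ⟨g, rfl⟩
        simp only [hBadDef, Set.mem_setOf_eq]
        intro hj
        have h2 := htrans (↑g⁻¹) g⁻¹.2 ((g : WreathProduct H I Γ).right • i₀) hj
        rw [InvMemClass.coe_inv, SemidirectProduct.inv_right, inv_smul_smul] at h2
        exact hi₀ h2
      exact horb i₀ (hBadfin.subset hOrbBad)
    choose b hb hub using hex
    have hbsupp : {i : I | b i ≠ 1}.Finite := by
      apply ((hlevel (-1) (by norm_num)).image Prod.snd).subset
      intro i hi
      refine ⟨(b i, i), ?_, rfl⟩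
      have := hb i
      simp only [hμdef] at this
      rw [if_neg hi] at this
      simp only [Set.mem_setOf_eq]
      linear_combination -this
    refine ⟨⟨b, hbsupp⟩, ?_⟩
    intro g hg
    have key : ∀ i : I, (g.left : I → H) i * b (g.right⁻¹ • i) = b i := by
      intro i
      have h1 : μ (σ g (b (g.right⁻¹ • i), g.right⁻¹ • i)) = 1 :=
        (hμinv g hg _).trans (hb _)
      simp only [hσdef, smul_inv_smul] at h1
      exact hub i _ h1
    refine ⟨g.right, ?_⟩
    have hleft : (g.left : FinSuppSubgroup H I) * (shiftHom H I Γ) g.right ⟨b, hbsupp⟩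
        = (⟨b, hbsupp⟩ : FinSuppSubgroup H I) := by
      apply Subtype.ext
      funext i
      have : ((g.left * (shiftHom H I Γ) g.right ⟨b, hbsupp⟩ : FinSuppSubgroup H I) : I → H) i
          = (g.left : I → H) i * b (g.right⁻¹ • i) := rfl
      rw [this]
      exact key i
    have : (SemidirectProduct.inl (⟨b, hbsupp⟩ : FinSuppSubgroup H I))⁻¹ * g
        * SemidirectProduct.inl ⟨b, hbsupp⟩
        = SemidirectProduct.inr g.right := by
      rw [← map_inv]
      ext
      · simp only [SemidirectProduct.mul_left, SemidirectProduct.left_inl,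
          SemidirectProduct.right_inl, SemidirectProduct.left_inr, map_one,
          MulAut.one_apply, mul_one, SemidirectProduct.mul_right, one_mul]
        rw [mul_assoc, hleft, inv_mul_cancel]
      · simp only [SemidirectProduct.mul_right, SemidirectProduct.right_inl,
          SemidirectProduct.right_inr, mul_one, one_mul]
    rw [this]
end

section
/- Let G be a countable group and Λ₁, Λ₂ ≤ G subgroups such that Λ₁ ∩ Λ₂ has infinite index in Λ₁. Then there exists a sequence (λ_n) of elements of Λ₁ such that for every finite subset F ⊆ G one has λ_n ∉ FΛ₂ for all sufficiently large n, where FΛ₂ = {fλ : f ∈ F, λ ∈ Λ₂}. -/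
/-- Let `G` be a countable group and `Λ₁, Λ₂ ≤ G` subgroups such that
`Λ₁ ∩ Λ₂` has infinite index in `Λ₁`.  Then there exists a sequence `(λ_n)` in `Λ₁` such
that for every finite subset `F ⊆ G` one has `λ_n ∉ FΛ₂` for all sufficiently large `n`. -/
theorem exists_seq_escaping_finitely_many_cosets
    {G : Type*} [Group G] [Countable G] (Λ₁ Λ₂ : Subgroup G)
    (hinf : Infinite (Λ₁ ⧸ (Λ₁ ⊓ Λ₂).subgroupOf Λ₁)) :
    ∃ lam : ℕ → G, (∀ n, lam n ∈ Λ₁) ∧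
      ∀ F : Set G, F.Finite → ∃ N : ℕ, ∀ n ≥ N, ¬ ∃ f ∈ F, ∃ m ∈ Λ₂, lam n = f * m := by
  have key : ∀ S : Set G, S.Finite →
      ∃ x : Λ₁, ¬ ∃ f ∈ S, ∃ m ∈ Λ₂, (x : G) = f * m := by
    intro S hS
    set φ : Λ₁ → Λ₁ ⧸ (Λ₁ ⊓ Λ₂).subgroupOf Λ₁ := QuotientGroup.mk with hφ
    set B : Set Λ₁ := {x | ∃ f ∈ S, ∃ m ∈ Λ₂, (x : G) = f * m} with hB
    have hBim : (φ '' B).Finite := by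
      have hsub : φ '' B ⊆
          ⋃ f ∈ S, {q | ∃ x : Λ₁, φ x = q ∧ ∃ m ∈ Λ₂, (x : G) = f * m} := by
        rintro q ⟨x, ⟨f, hf, m, hm, hx⟩, rfl⟩
        exact Set.mem_biUnion hf ⟨x, rfl, m, hm, hx⟩
      refine Set.Finite.subset (hS.biUnion fun f hf => ?_) hsub
      apply Set.Subsingleton.finite
      rintro q ⟨x, rfl, m, hm, hx⟩ q' ⟨y, rfl, m', hm', hy⟩
      refine (QuotientGroup.eq).2 ?_
      have hmem : ((x⁻¹ * y : Λ₁) : G) ∈ Λ₁ ⊓ Λ₂ := by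
        constructor
        · exact (x⁻¹ * y).2
        · have : ((x⁻¹ * y : Λ₁) : G) = m⁻¹ * m' := by
            push_cast
            rw [hx, hy]
            group
          rw [this]
          exact Λ₂.mul_mem (Λ₂.inv_mem hm) hm'
      exact Subgroup.mem_subgroupOf.2 hmem
    obtain ⟨q, hq⟩ := hBim.infinite_compl.nonempty
    obtain ⟨x, rfl⟩ := QuotientGroup.mk_surjective q
    refine ⟨x, fun hx => hq ?_⟩
    exact ⟨x, hx, rfl⟩
  obtain ⟨e, he⟩ := exists_surjective_nat G
  choose lam hlam using fun n => key (e '' Set.Iic n) ((Set.finite_Iic n).image e)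
  refine ⟨fun n => (lam n : G), fun n => (lam n).2, ?_⟩
  intro F hF
  classical
  set idx : G → ℕ := fun g => (he g).choose with hidx
  have hidx_spec : ∀ g, e (idx g) = g := fun g => (he g).choose_spec
  refine ⟨hF.toFinset.sup idx, fun n hn ⟨f, hf, m, hm, hx⟩ => ?_⟩
  refine hlam n ⟨f, ?_, m, hm, hx⟩
  have : idx f ≤ n := le_trans (Finset.le_sup (hF.mem_toFinset.2 hf)) hn
  exact ⟨idx f, this, hidx_spec f⟩
end

section
/- Let S, T ⊆ ℕ^{<ℕ} be trees all of whose elements are sequences consisting only of even numbers, and let ψ : S → T be a tree isomorphism, i.e. a bijection satisfying |ψ(σ)| = |σ| for all σ ∈ S and ψ(σ⁻) = ψ(σ)⁻ for all σ ∈ S with |σ| ≥ 1. Then ψ extends to a bijection ψ̃ : ℕ^{<ℕ} → ℕ^{<ℕ} with ψ̃|_S = ψ, |ψ̃(σ)| = |σ| for all σ, and ψ̃(σ⁻) = ψ̃(σ)⁻ for all σ with |σ| ≥ 1. -/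
/-- Extend an injection on a set of naturals with infinite-complement image
to a permutation of ℕ. -/
lemma extend_to_equiv (A : Set ℕ) (h : ℕ → ℕ) (hinj : Set.InjOn h A)
    (hA : (Aᶜ : Set ℕ).Infinite) (hB : ((h '' A)ᶜ : Set ℕ).Infinite) :
    ∃ e : ℕ ≃ ℕ, ∀ n ∈ A, e n = h n := by
  classical
  have iA : Infinite (↥(Aᶜ : Set ℕ)) := hA.to_subtype
  have iB : Infinite (↥((h '' A)ᶜ : Set ℕ)) := hB.to_subtype
  obtain ⟨e₂⟩ : Nonempty (↥(Aᶜ : Set ℕ) ≃ ↥((h '' A)ᶜ : Set ℕ)) := inferInstance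
  set e₁ : A ≃ (h '' A) := Equiv.Set.imageOfInjOn h A hinj
  refine ⟨((Equiv.Set.sumCompl A).symm.trans (e₁.sumCongr e₂)).trans
    (Equiv.Set.sumCompl (h '' A)), fun n hn => ?_⟩
  simp [Equiv.Set.sumCompl_symm_apply_of_mem hn, e₁, Equiv.Set.imageOfInjOn]

/-- Let `S, T ⊆ ℕ^{<ℕ}` be trees all of whose elements are sequences of
even numbers, and let `ψ : S → T` be a tree isomorphism (a bijection preserving length and
compatible with removing the last entry).  Then `ψ` extends to a bijection
`ψ̃ : ℕ^{<ℕ} → ℕ^{<ℕ}` preserving length and compatible with removing the last entry. -/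
theorem tree_isomorphism_extends
    (S T : Set (List ℕ)) (hS : IsTree S) (hT : IsTree T)
    (hSeven : ∀ σ ∈ S, ∀ x ∈ σ, Even x) (hTeven : ∀ σ ∈ T, ∀ x ∈ σ, Even x)
    (ψ : List ℕ → List ℕ) (hbij : Set.BijOn ψ S T)
    (hlen : ∀ σ ∈ S, (ψ σ).length = σ.length)
    (hdrop : ∀ σ ∈ S, σ ≠ [] → ψ σ.dropLast = (ψ σ).dropLast) :
    ∃ ψ' : List ℕ → List ℕ, Function.Bijective ψ' ∧
      (∀ σ ∈ S, ψ' σ = ψ σ) ∧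
      (∀ σ : List ℕ, (ψ' σ).length = σ.length) ∧
      (∀ σ : List ℕ, σ ≠ [] → ψ' σ.dropLast = (ψ' σ).dropLast) := by
  classical
  -- last-entry function: ψ (σ ++ [n]) = ψ σ ++ [h σ n]
  have hlast : ∀ σ n, ∃ m, σ ∈ S → σ ++ [n] ∈ S → ψ (σ ++ [n]) = ψ σ ++ [m] := by
    intro σ n
    by_cases hσ : σ ∈ S
    · by_cases hσn : σ ++ [n] ∈ S
      · have hne : ψ (σ ++ [n]) ≠ [] := by
          intro h0
          have := hlen _ hσn
          simp [h0] at this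
        refine ⟨(ψ (σ ++ [n])).getLast hne, fun _ _ => ?_⟩
        have hd : ψ ((σ ++ [n]).dropLast) = (ψ (σ ++ [n])).dropLast :=
          hdrop _ hσn (by simp)
        rw [List.dropLast_concat] at hd
        conv_lhs => rw [← List.dropLast_append_getLast hne]
        rw [← hd]
      · exact ⟨0, fun _ h => absurd h hσn⟩
    · exact ⟨0, fun h => absurd h hσ⟩
  choose h hh using hlast
  -- for each σ, an equiv of ℕ extending h σ on {n | σ ++ [n] ∈ S}
  have hE : ∀ σ, ∃ e : ℕ ≃ ℕ, σ ∈ S → ∀ n, σ ++ [n] ∈ S → e n = h σ n := by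
    intro σ
    by_cases hσ : σ ∈ S
    · set A : Set ℕ := {n | σ ++ [n] ∈ S} with hA
      have hinj : Set.InjOn (h σ) A := by
        intro n₁ h₁ n₂ h₂ heq
        have e₁ := hh σ n₁ hσ h₁
        have e₂ := hh σ n₂ hσ h₂
        have : ψ (σ ++ [n₁]) = ψ (σ ++ [n₂]) := by rw [e₁, e₂, heq]
        have := hbij.injOn h₁ h₂ this
        simpa using this
      have oddA : ∀ k, 2 * k + 1 ∈ (Aᶜ : Set ℕ) := by
        intro k hk
        have := hSeven _ hk (2 * k + 1) (by simp)
        simp [Nat.even_add_one, Nat.even_iff] at this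
      have oddB : ∀ k, 2 * k + 1 ∈ ((h σ '' A)ᶜ : Set ℕ) := by
        rintro k ⟨n, hn, hkn⟩
        have hmem : ψ σ ++ [h σ n] ∈ T := by
          rw [← hh σ n hσ hn]; exact hbij.mapsTo hn
        have := hTeven _ hmem (h σ n) (by simp)
        rw [hkn] at this
        simp [Nat.even_add_one, Nat.even_iff] at this
      have inj2 : Function.Injective (fun k : ℕ => 2 * k + 1) := by
        intro a b hab; simpa using hab
      obtain ⟨e, he⟩ := extend_to_equiv A (h σ) hinj
        (Set.infinite_of_injective_forall_mem inj2 oddA)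
        (Set.infinite_of_injective_forall_mem inj2 oddB)
      exact ⟨e, fun _ n hn => he n hn⟩
    · exact ⟨Equiv.refl ℕ, fun h => absurd h hσ⟩
  choose E hEspec using hE
  -- define F on reversed lists by structural recursion
  set F : List ℕ → List ℕ :=
    fun l => List.rec ([] : List ℕ) (fun n t ih => E t.reverse n :: ih) l with hF
  have Fnil : F [] = [] := rfl
  have Fcons : ∀ n t, F (n :: t) = E t.reverse n :: F t := fun _ _ => rfl
  set ψ' : List ℕ → List ℕ := fun σ => (F σ.reverse).reverse with hψ'
  have Flen : ∀ l, (F l).length = l.length := by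
    intro l; induction l with
    | nil => rfl
    | cons n t ih => simp [Fcons, ih]
  have key : ∀ τ n, ψ' (τ ++ [n]) = ψ' τ ++ [E τ n] := by
    intro τ n
    simp only [hψ', List.reverse_append, List.reverse_cons, List.reverse_nil,
      List.nil_append, List.singleton_append]
    rw [Fcons]
    simp
  have Finj : Function.Injective F := by
    intro a b
    induction a generalizing b with
    | nil => cases b with
      | nil => intro _; rfl
      | cons m t => intro hab; rw [Fnil, Fcons] at hab; exact absurd hab (by simp)
    | cons n t ih =>
      cases b with
      | nil => intro hab; rw [Fnil, Fcons] at hab; exact absurd hab (by simp)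
      | cons m u =>
        intro hab
        rw [Fcons, Fcons] at hab
        injection hab with h1 h2
        have ht : t = u := ih h2
        subst ht
        have : n = m := (E t.reverse).injective h1
        rw [this]
  have Fsurj : Function.Surjective F := by
    intro l
    induction l with
    | nil => exact ⟨[], rfl⟩
    | cons x l ih =>
      obtain ⟨m, hm⟩ := ih
      exact ⟨(E m.reverse).symm x :: m, by rw [Fcons, hm]; simp⟩
  refine ⟨ψ', ?_, ?_, ?_, ?_⟩
  · have : ψ' = List.reverse ∘ F ∘ List.reverse := rfl
    rw [this]
    exact (List.reverse_bijective.comp ⟨Finj, Fsurj⟩).comp List.reverse_bijective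
  · intro σ hσ
    induction σ using List.reverseRecOn with
    | nil =>
      have h0 : ψ [] = [] := by
        have := hlen [] hσ
        simpa [List.length_eq_zero_iff] using this
      simp [hψ', Fnil, h0]
    | append_singleton τ n ih =>
      have hτ : τ ∈ S := hS _ hσ τ ⟨[n], rfl⟩
      rw [key, ih hτ, hh τ n hτ hσ, hEspec τ hτ n hσ]
  · intro σ
    simp [hψ', Flen]
  · intro σ hne
    conv_rhs => rw [← List.dropLast_append_getLast hne, key]
    rw [List.dropLast_concat]
end

section
/- Let G = H ≀_I Γ be a generalized wreath product of countable groups. For each g = (h, γ) ∈ G define b(g) : H × I → ℝ by b(g)(k, i) = 1_{[k = h_i]} − 1_{[k = e]}. Then each b(g) is finitely supported (in particular square-summable), and b satisfies the 1-cocycle identity b(g g') = π(g)b(g') + b(g) for all g, g' ∈ G, where (π(g)ξ)(k, i) := ξ(h_i⁻¹k, γ⁻¹·i) for g = (h, γ). -/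
variable {H Γ I : Type*} [Group H] [Group Γ] [MulAction Γ I]

/-- The map `b(g)(k, i) = 1_{[k = h_i]} − 1_{[k = e]}` for `g = (h, γ) ∈ H ≀_I Γ`. -/
def wreathCocycle [DecidableEq H] (g : WreathProduct H I Γ) : H × I → ℝ := fun x =>
  (if x.1 = (g.left : I → H) x.2 then (1 : ℝ) else 0) - (if x.1 = 1 then (1 : ℝ) else 0)

/-- The representation `(π(g)ξ)(k, i) = ξ(h_i⁻¹k, γ⁻¹·i)` of `H ≀_I Γ` on functions
on `H × I`. -/
def wreathRep (g : WreathProduct H I Γ) (ξ : H × I → ℝ) : H × I → ℝ := fun x =>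
  ξ (((g.left : I → H) x.2)⁻¹ * x.1, g.right⁻¹ • x.2)

/-- For the generalized wreath product `G = H ≀_I Γ`, the map
`b(g)(k, i) = 1_{[k = h_i]} − 1_{[k = e]}` is finitely supported (in particular
square-summable) for every `g ∈ G`, and satisfies the 1-cocycle identity
`b(gg') = π(g)b(g') + b(g)`. -/
theorem wreathCocycle_finite_support_and_cocycle
    [Countable H] [Countable Γ] [Countable I] [DecidableEq H] :
    (∀ g : WreathProduct H I Γ,
        (Function.support (wreathCocycle g)).Finite ∧ Memℓp (wreathCocycle g) 2) ∧
    (∀ g g' : WreathProduct H I Γ,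
        wreathCocycle (g * g') = wreathRep g (wreathCocycle g') + wreathCocycle g) := by
  constructor
  · intro g
    have hfin : (Function.support (wreathCocycle g)).Finite := by
      have hx : {i | (g.left : I → H) i ≠ 1}.Finite := g.left.2
      apply ((hx.image (fun i => ((g.left : I → H) i, i))).union
        (hx.image (fun i => ((1 : H), i)))).subset
      intro x hx'
      simp only [Function.mem_support, wreathCocycle] at hx'
      by_cases h1 : x.1 = (g.left : I → H) x.2
      · left
        refine ⟨x.2, ?_, Prod.ext h1.symm rfl⟩
        intro hone
        simp [h1, hone] at hx'
      · right
        by_cases h2 : x.1 = 1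
        · refine ⟨x.2, ?_, Prod.ext h2.symm rfl⟩
          intro hone
          exact h1 (by rw [h2, hone])
        · simp [h1, h2] at hx'
    refine ⟨hfin, memℓp_gen ?_⟩
    apply summable_of_finite_support
    apply hfin.subset
    intro x hx'
    simp only [Function.mem_support] at hx' ⊢
    intro h
    simp [h] at hx'
  · intro g g'
    funext x
    have hleft : ((g * g').left : I → H) x.2
        = (g.left : I → H) x.2 * (g'.left : I → H) (g.right⁻¹ • x.2) := rfl
    simp only [wreathCocycle, wreathRep, Pi.add_apply, hleft]
    have : ((g.left : I → H) x.2)⁻¹ * x.1 = (g'.left : I → H) (g.right⁻¹ • x.2)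
        ↔ x.1 = (g.left : I → H) x.2 * (g'.left : I → H) (g.right⁻¹ • x.2) := by
      rw [inv_mul_eq_iff_eq_mul]
    rw [if_congr this rfl rfl]
    have h2 : ((g.left : I → H) x.2)⁻¹ * x.1 = 1 ↔ x.1 = (g.left : I → H) x.2 := by
      rw [inv_mul_eq_one, eq_comm]
    rw [if_congr h2 rfl rfl]
    ring
end
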